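/- arXiv:1008.4740 — 7 statements merged into one kernel-verified Lean document; each statement's English description precedes it below -/
import Mathlib

section
/- For all nonnegative integers m, the double sum ∑_{j,k} C(2m+1, 2j) * C(m-j, k) * C(2k+2j, k+j) * (a+1)^j * (a-1)^k / 2^{3(k+j)} equals the single sum 2^{-2m} ∑_{k=0}^{m} 2^k * C(2m-2k, m-k) * C(m+k, k) * (a+1)^k, as polynomials in a. -/
open Finset


def Tsum (M n : ℕ) : ℚ :=
  ∑ s ∈ Finset.range (M+1), (-1:ℚ)^s / 4^s * (Nat.choose M s) * (Nat.choose (2*(n+s)) (n+s))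

lemma Tsum_rec (M n : ℕ) : Tsum (M+1) n = Tsum M n - (1/4) * Tsum M (n+1) := by
  have hg : ∀ u, ((-1:ℚ)^u / 4^u * (Nat.choose M u) * (Nat.choose (2*(n+u)) (n+u))) =
      ((fun u => (-1:ℚ)^u / 4^u * (Nat.choose M u) * (Nat.choose (2*(n+u)) (n+u))) u) :=
    fun _ => rfl
  unfold Tsum
  rw [Finset.sum_range_succ' (fun s => (-1:ℚ)^s / 4^s * (Nat.choose (M+1) s) * (Nat.choose (2*(n+s)) (n+s))) (M+1)]
  have split : ∀ s ∈ Finset.range (M+1),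
      (-1:ℚ)^(s+1) / 4^(s+1) * (Nat.choose (M+1) (s+1)) * (Nat.choose (2*(n+(s+1))) (n+(s+1)))
      = (-1:ℚ)^(s+1) / 4^(s+1) * (Nat.choose M (s+1)) * (Nat.choose (2*(n+(s+1))) (n+(s+1)))
        + (-(1/4)) * ((-1:ℚ)^s / 4^s * (Nat.choose M s) * (Nat.choose (2*((n+1)+s)) ((n+1)+s))) := by
    intro s _
    rw [Nat.choose_succ_succ]
    push_cast
    have : n + (s+1) = (n+1) + s := by omega
    rw [this]
    ring
  rw [Finset.sum_congr rfl split, Finset.sum_add_distrib, ← Finset.mul_sum]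
  have h1 : (∑ s ∈ Finset.range (M+1),
      (-1:ℚ)^(s+1) / 4^(s+1) * (Nat.choose M (s+1)) * (Nat.choose (2*(n+(s+1))) (n+(s+1))))
      = Tsum M n - (-1:ℚ)^0 / 4^0 * (Nat.choose M 0) * (Nat.choose (2*(n+0)) (n+0)) := by
    have e1 := Finset.sum_range_succ' (fun u => (-1:ℚ)^u / 4^u * (Nat.choose M u) * (Nat.choose (2*(n+u)) (n+u))) (M+1)
    have e2 := Finset.sum_range_succ (fun u => (-1:ℚ)^u / 4^u * (Nat.choose M u) * (Nat.choose (2*(n+u)) (n+u))) (M+1)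
    have hlast : ((-1:ℚ)^(M+1) / 4^(M+1) * (Nat.choose M (M+1)) * (Nat.choose (2*(n+(M+1))) (n+(M+1)))) = 0 := by
      simp [Nat.choose_succ_self]
    unfold Tsum
    rw [e2, hlast] at e1
    linarith [e1]
  rw [h1]
  simp [Tsum]
  ring

lemma Tsum_eq (M n : ℕ) : Tsum M n * (Nat.choose (M+n) n) * 4^M
    = (Nat.choose (2*M) M : ℚ) * (Nat.choose (2*n) n) := by
  induction M generalizing n with
  | zero => simp [Tsum]
  | succ M ih =>
    have ih1 := ih n
    have ih2 := ih (n+1)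
    have a1 : ((n:ℚ)+1) * (Nat.choose (M+n+1) (n+1)) = ((M:ℚ)+n+1) * (Nat.choose (M+n) n) := by
      have := Nat.add_one_mul_choose_eq (M+n) n
      have := congrArg (Nat.cast (R := ℚ)) this
      push_cast at this
      linarith [this]
    have a2 : ((M:ℚ)+1) * (Nat.choose (M+n+1) n) = ((M:ℚ)+n+1) * (Nat.choose (M+n) n) := by
      have h := Nat.choose_mul_succ_eq (M+n) n
      have h2 : (M+n+1) - n = M+1 := by omega
      rw [h2] at h
      have := congrArg (Nat.cast (R := ℚ)) h
      push_cast at this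
      linarith [this]
    have a3 : ((M:ℚ)+1) * (Nat.choose (2*(M+1)) (M+1)) = 2*(2*(M:ℚ)+1) * (Nat.choose (2*M) M) := by
      have h := Nat.succ_mul_centralBinom_succ M
      unfold Nat.centralBinom at h
      have := congrArg (Nat.cast (R := ℚ)) h
      push_cast at this
      push_cast
      linarith [this]
    have a4 : ((n:ℚ)+1) * (Nat.choose (2*(n+1)) (n+1)) = 2*(2*(n:ℚ)+1) * (Nat.choose (2*n) n) := by
      have h := Nat.succ_mul_centralBinom_succ n
      unfold Nat.centralBinom at h
      have := congrArg (Nat.cast (R := ℚ)) h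
      push_cast at this
      push_cast
      linarith [this]
    rw [Tsum_rec]
    rw [show M+1+n = M+n+1 by omega]
    rw [show M+(n+1) = M+n+1 from by omega] at ih2
    have hp : ((Nat.choose (M+n) n : ℚ)) ≠ 0 :=
      Nat.cast_ne_zero.mpr (Nat.choose_pos (by omega)).ne'
    have hq : ((Nat.choose (M+n+1) (n+1) : ℚ)) ≠ 0 :=
      Nat.cast_ne_zero.mpr (Nat.choose_pos (by omega)).ne' 
    have hD : (((M:ℚ)+1)*((n:ℚ)+1)*(Nat.choose (M+n) n : ℚ)*(Nat.choose (M+n+1) (n+1) : ℚ)) ≠ 0 := by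
      have hM : ((M:ℚ)+1) ≠ 0 := by positivity
      have hn : ((n:ℚ)+1) ≠ 0 := by positivity
      exact mul_ne_zero (mul_ne_zero (mul_ne_zero hM hn) hp) hq
    apply mul_right_cancel₀ hD
    linear_combination (4*((n:ℚ)+1)*((M:ℚ)+1)*(Nat.choose (M+n+1) (n+1):ℚ)*(Nat.choose (M+n+1) n:ℚ)) * ih1
      - (((n:ℚ)+1)*((M:ℚ)+1)*(Nat.choose (M+n) n:ℚ)*(Nat.choose (M+n+1) n:ℚ)) * ih2
      + (4*((M:ℚ)+(n:ℚ)+1)*(Nat.choose (M+n) n:ℚ)*(Nat.choose (2*M) M:ℚ)*(Nat.choose (2*n) n:ℚ)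
         - 2*(2*(M:ℚ)+1)*(Nat.choose (2*M) M:ℚ)*(Nat.choose (2*n) n:ℚ)*(Nat.choose (M+n) n:ℚ)) * a1
      + (4*((n:ℚ)+1)*(Nat.choose (M+n+1) (n+1):ℚ)*(Nat.choose (2*M) M:ℚ)*(Nat.choose (2*n) n:ℚ)
         - ((n:ℚ)+1)*(Nat.choose (M+n) n:ℚ)*(Nat.choose (2*M) M:ℚ)*(Nat.choose (2*(n+1)) (n+1):ℚ)) * a2
      - (((n:ℚ)+1)*(Nat.choose (M+n) n:ℚ)*(Nat.choose (M+n+1) (n+1):ℚ)*(Nat.choose (2*n) n:ℚ)) * a3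
      - (((M:ℚ)+(n:ℚ)+1)*(Nat.choose (M+n) n:ℚ)^2*(Nat.choose (2*M) M:ℚ)) * a4

def Gq (m c : ℕ) : ℚ := ∑ j ∈ Finset.range (m+1), (Nat.choose (2*m+1) (2*j) : ℚ) * (Nat.choose (m-j) c)
def Hq (m c : ℕ) : ℚ := ∑ j ∈ Finset.range (m+1), (Nat.choose (2*m+1) (2*j+1) : ℚ) * (Nat.choose (m-j) c)
noncomputable def gcf (m c : ℕ) : ℚ := if c ≤ m then 4^(m-c) * (Nat.choose (2*m-c) c) else 0

lemma Gq_succ (m c : ℕ) : Gq (m+1) c = (Nat.choose (m+1) c : ℚ)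
    + ∑ j ∈ Finset.range (m+1), (Nat.choose (2*m+3) (2*j+2) : ℚ) * (Nat.choose (m-j) c) := by
  unfold Gq
  rw [Finset.sum_range_succ' (fun j => (Nat.choose (2*(m+1)+1) (2*j) : ℚ) * (Nat.choose (m+1-j) c)) (m+1)]
  rw [Finset.sum_congr rfl (fun j _ => by
    rw [show 2*(j+1) = 2*j+2 from by ring, show m+1-(j+1) = m-j from by omega,
      show 2*(m+1)+1 = 2*m+3 from by ring])]
  simp [add_comm]

lemma Hq_succ (m c : ℕ) : Hq (m+1) c = (2*m+3) * (Nat.choose (m+1) c : ℚ)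
    + ∑ j ∈ Finset.range (m+1), (Nat.choose (2*m+3) (2*j+3) : ℚ) * (Nat.choose (m-j) c) := by
  unfold Hq
  rw [Finset.sum_range_succ' (fun j => (Nat.choose (2*(m+1)+1) (2*j+1) : ℚ) * (Nat.choose (m+1-j) c)) (m+1)]
  rw [Finset.sum_congr rfl (fun j _ => by
    rw [show 2*(j+1)+1 = 2*j+3 from by ring, show m+1-(j+1) = m-j from by omega,
      show 2*(m+1)+1 = 2*m+3 from by ring])]
  norm_num [Nat.choose_one_right]
  push_cast
  ring

lemma Asum (m c : ℕ) : ∑ j ∈ Finset.range (m+2), (Nat.choose (2*m+1) (2*j) : ℚ) * (Nat.choose (m+1-j) c)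
    = (Nat.choose (m+1) c : ℚ) + ∑ j ∈ Finset.range (m+1), (Nat.choose (2*m+1) (2*j+2) : ℚ) * (Nat.choose (m-j) c) := by
  rw [Finset.sum_range_succ' (fun j => (Nat.choose (2*m+1) (2*j) : ℚ) * (Nat.choose (m+1-j) c)) (m+1)]
  rw [Finset.sum_congr rfl (fun j _ => by
    rw [show 2*(j+1) = 2*j+2 from by ring, show m+1-(j+1) = m-j from by omega])]
  simp [add_comm]

lemma Bsum (m c : ℕ) : ∑ j ∈ Finset.range (m+2), (Nat.choose (2*m+1) (2*j+1) : ℚ) * (Nat.choose (m+1-j) c)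
    = (2*m+1) * (Nat.choose (m+1) c : ℚ) + ∑ j ∈ Finset.range (m+1), (Nat.choose (2*m+1) (2*j+3) : ℚ) * (Nat.choose (m-j) c) := by
  rw [Finset.sum_range_succ' (fun j => (Nat.choose (2*m+1) (2*j+1) : ℚ) * (Nat.choose (m+1-j) c)) (m+1)]
  rw [Finset.sum_congr rfl (fun j _ => by
    rw [show 2*(j+1)+1 = 2*j+3 from by ring, show m+1-(j+1) = m-j from by omega])]
  norm_num [Nat.choose_one_right]
  push_cast
  ring

lemma Asum' (m c : ℕ) : ∑ j ∈ Finset.range (m+2), (Nat.choose (2*m+1) (2*j) : ℚ) * (Nat.choose (m+1-j) (c+1))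
    = Gq m (c+1) + Gq m c := by
  rw [Finset.sum_range_succ]
  have hz : (Nat.choose (2*m+1) (2*(m+1)) : ℚ) = 0 := by
    rw [Nat.choose_eq_zero_of_lt (by omega)]; norm_num
  rw [hz]
  rw [Finset.sum_congr rfl (fun j hj => by
    have hj' : j ≤ m := by simpa [Nat.lt_succ_iff] using hj
    rw [show m+1-j = (m-j)+1 from by omega, Nat.choose_succ_succ (m-j) c])]
  unfold Gq
  push_cast
  rw [Finset.sum_congr rfl (fun j _ => mul_add _ _ _), Finset.sum_add_distrib]
  ring

lemma Bsum' (m c : ℕ) : ∑ j ∈ Finset.range (m+2), (Nat.choose (2*m+1) (2*j+1) : ℚ) * (Nat.choose (m+1-j) (c+1))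
    = Hq m (c+1) + Hq m c := by
  rw [Finset.sum_range_succ]
  have hz : (Nat.choose (2*m+1) (2*(m+1)+1) : ℚ) = 0 := by
    rw [Nat.choose_eq_zero_of_lt (by omega)]; norm_num
  rw [hz]
  rw [Finset.sum_congr rfl (fun j hj => by
    have hj' : j ≤ m := by simpa [Nat.lt_succ_iff] using hj
    rw [show m+1-j = (m-j)+1 from by omega, Nat.choose_succ_succ (m-j) c])]
  unfold Hq
  push_cast
  rw [Finset.sum_congr rfl (fun j _ => mul_add _ _ _), Finset.sum_add_distrib]
  ring

lemma Esum (m c : ℕ) : ∑ j ∈ Finset.range (m+1), (Nat.choose (2*m+1) (2*j+2) : ℚ) * (Nat.choose (m-j) (c+1))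
    = Gq m (c+1) + Gq m c - (Nat.choose (m+1) (c+1) : ℚ) := by
  have h1 := Asum m (c+1)
  have h2 := Asum' m c
  linarith

lemma Fsum (m c : ℕ) : ∑ j ∈ Finset.range (m+1), (Nat.choose (2*m+1) (2*j+3) : ℚ) * (Nat.choose (m-j) (c+1))
    = Hq m (c+1) + Hq m c - (2*m+1) * (Nat.choose (m+1) (c+1) : ℚ) := by
  have h1 := Bsum m (c+1)
  have h2 := Bsum' m c
  linarith

lemma Esum0 (m : ℕ) : ∑ j ∈ Finset.range (m+1), (Nat.choose (2*m+1) (2*j+2) : ℚ) * (Nat.choose (m-j) 0)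
    = Gq m 0 - 1 := by
  have h1 := Asum m 0
  have h2 : ∑ j ∈ Finset.range (m+2), (Nat.choose (2*m+1) (2*j) : ℚ) * (Nat.choose (m+1-j) 0) = Gq m 0 := by
    rw [Finset.sum_range_succ]
    have hz : (Nat.choose (2*m+1) (2*(m+1)) : ℚ) = 0 := by
      rw [Nat.choose_eq_zero_of_lt (by omega)]; norm_num
    rw [hz]
    unfold Gq
    simp
  rw [h2] at h1
  simp at h1 ⊢
  linarith

lemma Fsum0 (m : ℕ) : ∑ j ∈ Finset.range (m+1), (Nat.choose (2*m+1) (2*j+3) : ℚ) * (Nat.choose (m-j) 0)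
    = Hq m 0 - (2*m+1) := by
  have h1 := Bsum m 0
  have h2 : ∑ j ∈ Finset.range (m+2), (Nat.choose (2*m+1) (2*j+1) : ℚ) * (Nat.choose (m+1-j) 0) = Hq m 0 := by
    rw [Finset.sum_range_succ]
    have hz : (Nat.choose (2*m+1) (2*(m+1)+1) : ℚ) = 0 := by
      rw [Nat.choose_eq_zero_of_lt (by omega)]; norm_num
    rw [hz]
    unfold Hq
    simp
  rw [h2] at h1
  simp at h1 ⊢
  linarith

lemma choose_split_even (m j : ℕ) : (Nat.choose (2*m+3) (2*j+2) : ℚ)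
    = (Nat.choose (2*m+1) (2*j) : ℚ) + 2*(Nat.choose (2*m+1) (2*j+1) : ℚ) + (Nat.choose (2*m+1) (2*j+2) : ℚ) := by
  rw [show 2*m+3 = (2*m+2)+1 from rfl, show 2*j+2 = (2*j+1)+1 from rfl, Nat.choose_succ_succ,
    show 2*m+2 = (2*m+1)+1 from rfl, show 2*j+1 = (2*j)+1 from rfl, Nat.choose_succ_succ,
    Nat.choose_succ_succ (2*m+1) (2*j+1)]
  push_cast
  ring

lemma choose_split_odd (m j : ℕ) : (Nat.choose (2*m+3) (2*j+3) : ℚ)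
    = (Nat.choose (2*m+1) (2*j+1) : ℚ) + 2*(Nat.choose (2*m+1) (2*j+2) : ℚ) + (Nat.choose (2*m+1) (2*j+3) : ℚ) := by
  rw [show 2*m+3 = (2*m+2)+1 from rfl, show 2*j+3 = (2*j+2)+1 from rfl, Nat.choose_succ_succ,
    show 2*m+2 = (2*m+1)+1 from rfl, show 2*j+2 = (2*j+1)+1 from rfl, Nat.choose_succ_succ,
    Nat.choose_succ_succ (2*m+1) (2*j+2)]
  push_cast
  ring

lemma recG (m c : ℕ) : Gq (m+1) (c+1) = 2*Gq m (c+1) + Gq m c + 2*Hq m (c+1) := by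
  rw [Gq_succ]
  rw [Finset.sum_congr rfl (fun j _ => by rw [choose_split_even m j])]
  rw [Finset.sum_congr rfl (fun j _ => add_mul _ _ _), Finset.sum_add_distrib]
  rw [Finset.sum_congr rfl (fun j _ => add_mul ((Nat.choose (2*m+1) (2*j) : ℚ)) (2*(Nat.choose (2*m+1) (2*j+1) : ℚ)) _), Finset.sum_add_distrib]
  have e := Esum m c
  unfold Gq Hq at *
  rw [Finset.sum_congr rfl (fun j _ => mul_assoc (2:ℚ) _ _), ← Finset.mul_sum]
  linarith

lemma recH (m c : ℕ) : Hq (m+1) (c+1) = 2*Hq m (c+1) + Hq m c + 2*Gq m (c+1) + 2*Gq m c := by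
  rw [Hq_succ]
  rw [Finset.sum_congr rfl (fun j _ => by rw [choose_split_odd m j])]
  rw [Finset.sum_congr rfl (fun j _ => add_mul _ _ _), Finset.sum_add_distrib]
  rw [Finset.sum_congr rfl (fun j _ => add_mul ((Nat.choose (2*m+1) (2*j+1) : ℚ)) (2*(Nat.choose (2*m+1) (2*j+2) : ℚ)) _), Finset.sum_add_distrib]
  have e := Esum m c
  have f := Fsum m c
  unfold Gq Hq at *
  rw [Finset.sum_congr rfl (fun j _ => mul_assoc (2:ℚ) _ _), ← Finset.mul_sum]
  linarith

lemma recG0 (m : ℕ) : Gq (m+1) 0 = 2*Gq m 0 + 2*Hq m 0 := by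
  rw [Gq_succ]
  have e := Esum0 m
  have h2 : ∑ j ∈ Finset.range (m+1), (Nat.choose (2*m+3) (2*j+2) : ℚ) * (Nat.choose (m-j) 0)
      = ∑ j ∈ Finset.range (m+1), ((Nat.choose (2*m+1) (2*j) : ℚ) * (Nat.choose (m-j) 0)
        + 2*((Nat.choose (2*m+1) (2*j+1) : ℚ) * (Nat.choose (m-j) 0))
        + (Nat.choose (2*m+1) (2*j+2) : ℚ) * (Nat.choose (m-j) 0)) := by
    refine Finset.sum_congr rfl (fun j _ => ?_)
    rw [choose_split_even m j]; ring
  rw [h2, Finset.sum_add_distrib, Finset.sum_add_distrib, ← Finset.mul_sum]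
  unfold Gq Hq at *
  simp at *
  linarith

lemma recH0 (m : ℕ) : Hq (m+1) 0 = 2*Hq m 0 + 2*Gq m 0 := by
  rw [Hq_succ]
  have e := Esum0 m
  have f := Fsum0 m
  have h2 : ∑ j ∈ Finset.range (m+1), (Nat.choose (2*m+3) (2*j+3) : ℚ) * (Nat.choose (m-j) 0)
      = ∑ j ∈ Finset.range (m+1), ((Nat.choose (2*m+1) (2*j+1) : ℚ) * (Nat.choose (m-j) 0)
        + 2*((Nat.choose (2*m+1) (2*j+2) : ℚ) * (Nat.choose (m-j) 0))
        + (Nat.choose (2*m+1) (2*j+3) : ℚ) * (Nat.choose (m-j) 0)) := by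
    refine Finset.sum_congr rfl (fun j _ => ?_)
    rw [choose_split_odd m j]; ring
  rw [h2, Finset.sum_add_distrib, Finset.sum_add_distrib, ← Finset.mul_sum]
  unfold Gq Hq at *
  simp at *
  linarith

lemma eq_t1 (c d : ℕ) : (Nat.choose (c+2*d+2) (c+1) : ℚ) * (c+2*d+3) = (Nat.choose (c+2*d+3) (c+1) : ℚ) * (2*d+2) := by
  have h := Nat.choose_mul_succ_eq (c+2*d+2) (c+1)
  rw [show c+2*d+2+1 = c+2*d+3 from by omega, show c+2*d+3-(c+1) = 2*d+2 from by omega] at h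
  exact_mod_cast h

lemma eq_t2 (c d : ℕ) : (Nat.choose (c+2*d+1) (c+1) : ℚ) * (c+2*d+2) = (Nat.choose (c+2*d+2) (c+1) : ℚ) * (2*d+1) := by
  have h := Nat.choose_mul_succ_eq (c+2*d+1) (c+1)
  rw [show c+2*d+1+1 = c+2*d+2 from by omega, show c+2*d+2-(c+1) = 2*d+1 from by omega] at h
  exact_mod_cast h

lemma eq2q (c d : ℕ) : (2*(d:ℚ)+2)*(2*(d:ℚ)+1) * (Nat.choose (c+2*d+3) (c+1) : ℚ)
    = ((c:ℚ)+2*d+2)*((c:ℚ)+2*d+3) * (Nat.choose (c+2*d+1) (c+1) : ℚ) := by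
  have h1 := eq_t1 c d
  have h2 := eq_t2 c d
  linear_combination (-(2*(d:ℚ)+1)) * h1 - ((c:ℚ)+2*d+3) * h2

lemma eq_t3 (c d : ℕ) : (Nat.choose (c+2*d+1) c : ℚ) * (c+2*d+2) = (Nat.choose (c+2*d+2) c : ℚ) * (2*d+2) := by
  have h := Nat.choose_mul_succ_eq (c+2*d+1) c
  rw [show c+2*d+1+1 = c+2*d+2 from by omega, show c+2*d+2-c = 2*d+2 from by omega] at h
  exact_mod_cast h

lemma eq_t4 (c d : ℕ) : (Nat.choose (c+2*d+1) (c+1) : ℚ) * ((c:ℚ)+1) = (Nat.choose (c+2*d+1) c : ℚ) * (2*(d:ℚ)+1) := by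
  have h := Nat.choose_succ_right_eq (c+2*d+1) c
  rw [show c+2*d+1-c = 2*d+1 from by omega] at h
  exact_mod_cast h

lemma eq1q (c d : ℕ) : (2*(d:ℚ)+2)*(2*(d:ℚ)+1) * (Nat.choose (c+2*d+2) c : ℚ)
    = ((c:ℚ)+1)*((c:ℚ)+2*d+2) * (Nat.choose (c+2*d+1) (c+1) : ℚ) := by
  have h3 := eq_t3 c d
  have h4 := eq_t4 c d
  linear_combination (-(2*(d:ℚ)+1)) * h3 - ((c:ℚ)+2*d+2) * h4

lemma thmGH (m : ℕ) : ∀ c, Gq m c = gcf m c ∧ (2*((m:ℚ)-(c:ℚ))+1) * Hq m c = (2*(m:ℚ)+1) * gcf m c := by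
  induction m with
  | zero =>
    intro c
    match c with
    | 0 => constructor <;> simp [Gq, Hq, gcf]
    | (c+1) => constructor <;> simp [Gq, Hq, gcf]
  | succ m ih =>
    intro c
    match c with
    | 0 =>
      obtain ⟨hg, hh⟩ := ih 0
      have hgcf : gcf m 0 = 4^m := by simp [gcf]
      have hgcfT : gcf (m+1) 0 = 4^(m+1) := by simp [gcf]
      rw [hgcf] at hg hh
      have hfac : (2*(m:ℚ)+1) ≠ 0 := by positivity
      have hh' : Hq m 0 = 4^m := by
        push_cast at hh
        have h2 : (2*(m:ℚ)+1) * Hq m 0 = (2*(m:ℚ)+1) * 4^m := by linear_combination hh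
        exact mul_left_cancel₀ hfac h2
      constructor
      · rw [recG0, hg, hh', hgcfT]; ring
      · rw [recH0, hg, hh', hgcfT]; push_cast; ring
    | (c+1) =>
      rcases lt_trichotomy (c+1) (m+1) with hlt | heq | hgt
      · -- generic case : c + 1 ≤ m
        obtain ⟨d, hd⟩ : ∃ d, m = c + 1 + d := ⟨m - (c+1), by omega⟩
        subst hd
        obtain ⟨hG1, hH1⟩ := ih (c+1)
        obtain ⟨hGc, hHc⟩ := ih c
        have hgcf1 : gcf (c+1+d) (c+1) = 4^d * (Nat.choose (c+2*d+1) (c+1) : ℚ) := by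
          rw [gcf, if_pos (by omega : c+1 ≤ c+1+d),
            show c+1+d-(c+1) = d from by omega, show 2*(c+1+d)-(c+1) = c+2*d+1 from by omega]
        have hgcfc : gcf (c+1+d) c = 4^(d+1) * (Nat.choose (c+2*d+2) c : ℚ) := by
          rw [gcf, if_pos (by omega : c ≤ c+1+d),
            show c+1+d-c = d+1 from by omega, show 2*(c+1+d)-c = c+2*d+2 from by omega]
        have hgcfT : gcf (c+1+d+1) (c+1) = 4^(d+1) * (Nat.choose (c+2*d+3) (c+1) : ℚ) := by
          rw [gcf, if_pos (by omega : c+1 ≤ c+1+d+1),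
            show c+1+d+1-(c+1) = d+1 from by omega, show 2*(c+1+d+1)-(c+1) = c+2*d+3 from by omega]
        rw [hgcf1] at hG1 hH1
        rw [hgcfc] at hGc hHc
        have e1 := eq1q c d
        have e2 := eq2q c d
        push_cast at hG1 hH1 hGc hHc ⊢
        constructor
        · rw [recG, hgcfT]
          have hfac : ((d:ℚ)+1)*(2*(d:ℚ)+1) ≠ 0 := by positivity
          apply mul_left_cancel₀ hfac
          push_cast
          linear_combination 2*((d:ℚ)+1)*(2*(d:ℚ)+1)*hG1 + ((d:ℚ)+1)*(2*(d:ℚ)+1)*hGc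
            + 2*((d:ℚ)+1)*hH1 - 2*(4:ℚ)^d*e2 + 2*(4:ℚ)^d*e1
        · rw [recH, hgcfT]
          have hfac : ((d:ℚ)+1)*(2*(d:ℚ)+1) ≠ 0 := by positivity
          apply mul_left_cancel₀ hfac
          push_cast
          linear_combination 2*((2*(d:ℚ)+1)*((d:ℚ)+1)*(2*(d:ℚ)+3))*hG1
            + 2*((2*(d:ℚ)+1)*((d:ℚ)+1)*(2*(d:ℚ)+3))*hGc
            + 2*((d:ℚ)+1)*(2*(d:ℚ)+3)*hH1 + ((2*(d:ℚ)+1)*((d:ℚ)+1))*hHc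
            - 2*(2*(c:ℚ)+2*(d:ℚ)+5)*(4:ℚ)^d*e2 + 2*(2*(c:ℚ)+6*(d:ℚ)+9)*(4:ℚ)^d*e1
      · -- boundary case : c = m
        have hc : c = m := by omega
        subst hc
        obtain ⟨hG1, hH1⟩ := ih (c+1)
        obtain ⟨hGc, hHc⟩ := ih c
        have hgcf1 : gcf c (c+1) = 0 := by rw [gcf, if_neg (by omega)]
        have hgcfc : gcf c c = 1 := by
          rw [gcf, if_pos le_rfl, show c-c = 0 from by omega, show 2*c-c = c from by omega]
          simp
        have hgcfT : gcf (c+1) (c+1) = 1 := by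
          rw [gcf, if_pos le_rfl, show c+1-(c+1) = 0 from by omega, show 2*(c+1)-(c+1) = c+1 from by omega]
          simp
        rw [hgcf1] at hG1 hH1
        rw [hgcfc] at hGc hHc
        have hH1' : Hq c (c+1) = 0 := by
          have hne : (2*((c:ℚ)-((c:ℚ)+1))+1) ≠ 0 := by
            intro h; rw [show (2*((c:ℚ)-((c:ℚ)+1))+1) = -1 from by ring] at h; norm_num at h
          have : (2*((c:ℚ)-(↑(c+1):ℚ))+1) * Hq c (c+1) = 0 := by rw [hH1]; ring
          push_cast at this
          exact (mul_eq_zero.mp this).resolve_left hne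
        have hHc' : Hq c c = 2*(c:ℚ)+1 := by
          have : (2*((c:ℚ)-(c:ℚ))+1) = 1 := by ring
          rw [this, one_mul] at hHc
          rw [hHc]; ring
        constructor
        · rw [recG, hgcfT, hG1, hGc, hH1']; ring
        · rw [recH, hgcfT, hG1, hGc, hH1', hHc']; push_cast; ring
      · -- degenerate case : c > m
        obtain ⟨hG1, hH1⟩ := ih (c+1)
        obtain ⟨hGc, hHc⟩ := ih c
        have hgcf1 : gcf m (c+1) = 0 := by rw [gcf, if_neg (by omega)]
        have hgcfc : gcf m c = 0 := by rw [gcf, if_neg (by omega)]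
        have hgcfT : gcf (m+1) (c+1) = 0 := by rw [gcf, if_neg (by omega)]
        rw [hgcf1] at hG1 hH1
        rw [hgcfc] at hGc hHc
        have hkey : ∀ k : ℕ, m < k → (2*((m:ℚ)-(k:ℚ))+1) ≠ 0 := by
          intro k hk h
          have : (k:ℚ) ≥ (m:ℚ)+1 := by exact_mod_cast hk
          nlinarith
        have hH1' : Hq m (c+1) = 0 := by
          have h0 : (2*((m:ℚ)-(↑(c+1):ℚ))+1) * Hq m (c+1) = 0 := by rw [hH1]; ring
          have hne := hkey (c+1) (by omega)
          push_cast at h0 hne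
          exact (mul_eq_zero.mp h0).resolve_left hne
        have hHc' : Hq m c = 0 := by
          have h0 : (2*((m:ℚ)-(c:ℚ))+1) * Hq m c = 0 := by rw [hHc]; ring
          have hne := hkey c (by omega)
          exact (mul_eq_zero.mp h0).resolve_left hne
        constructor
        · rw [recG, hgcfT, hG1, hGc, hH1']; ring
        · rw [recH, hgcfT, hG1, hGc, hH1', hHc']; ring

lemma I_final (m n : ℕ) (hn : n ≤ m) :
    ∑ j ∈ Finset.range (n+1), (Nat.choose (2*m+1) (2*j):ℚ) * (Nat.choose (m-j) (n-j))
      = 4^n * (Nat.choose (m+n) (2*n)) := by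
  have h1 : ∑ j ∈ Finset.range (n+1), (Nat.choose (2*m+1) (2*j):ℚ) * (Nat.choose (m-j) (n-j))
      = Gq m (m-n) := by
    rw [Finset.sum_congr rfl (fun j hj => by
      have hj' : j ≤ n := by simpa [Nat.lt_succ_iff] using hj
      rw [show (n-j : ℕ) = (m-j) - (m-n) from by omega, Nat.choose_symm (by omega : m-n ≤ m-j)])]
    unfold Gq
    refine Finset.sum_subset (Finset.range_subset_range.mpr (by omega : n+1 ≤ m+1)) ?_
    intro j hjm hjn
    have h1 : n < j := by simpa [Nat.lt_succ_iff] using hjn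
    have h2 : j ≤ m := by simpa [Nat.lt_succ_iff] using hjm
    rw [Nat.choose_eq_zero_of_lt (by omega : m-j < m-n)]
    norm_num
  rw [h1, (thmGH m (m-n)).1, gcf, if_pos (by omega : m-n ≤ m),
    show m-(m-n) = n from by omega, show 2*m-(m-n) = m+n from by omega,
    Nat.choose_symm_of_eq_add (by omega : m+n = (m-n) + 2*n)]

noncomputable def Mid (m : ℕ) (a : ℚ) (j i : ℕ) : ℚ :=
  (Nat.choose (2*m+1) (2*j) : ℚ) * (Nat.choose (m-j) i) * (a+1)^(j+i) / 8^(j+i)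
    * ((Nat.choose (2*(m-j-i)) (m-j-i) : ℚ) * (Nat.choose (2*(j+i)) (j+i))
       / ((Nat.choose m (j+i) : ℚ) * 4^(m-j-i)))

lemma step1 (M j : ℕ) (a : ℚ) :
    ∑ k ∈ Finset.range (M+1),
      (Nat.choose (2*(j+M)+1) (2*j) : ℚ) * (Nat.choose M k) *
        (Nat.choose (2*k+2*j) (k+j)) * (a+1)^j * (a-1)^k / 2^(3*(k+j))
    = ∑ i ∈ Finset.range (M+1), Mid (j+M) a j i := by
  have h1 : ∑ k ∈ Finset.range (M+1),
      (Nat.choose (2*(j+M)+1) (2*j) : ℚ) * (Nat.choose M k) *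
        (Nat.choose (2*k+2*j) (k+j)) * (a+1)^j * (a-1)^k / 2^(3*(k+j))
      = ∑ k ∈ Finset.range (M+1), ∑ i ∈ Finset.range (k+1),
        (Nat.choose (2*(j+M)+1) (2*j) : ℚ) * (Nat.choose M k) *
          (Nat.choose (2*k+2*j) (k+j)) * (a+1)^j *
          ((a+1)^i * (-2)^(k-i) * (Nat.choose k i)) / 2^(3*(k+j)) := by
    refine Finset.sum_congr rfl (fun k _ => ?_)
    have hak : (a-1)^k = ∑ i ∈ Finset.range (k+1), (a+1)^i * (-2)^(k-i) * (Nat.choose k i : ℚ) := by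
      rw [show a-1 = (a+1)+(-2) from by ring, add_pow]
    rw [hak, Finset.mul_sum, Finset.sum_div]
  rw [h1]
  have h2 := Finset.sum_Ico_Ico_comm 0 (M+1) (fun i k =>
    (Nat.choose (2*(j+M)+1) (2*j) : ℚ) * (Nat.choose M k) *
      (Nat.choose (2*k+2*j) (k+j)) * (a+1)^j *
      ((a+1)^i * (-2)^(k-i) * (Nat.choose k i)) / 2^(3*(k+j)))
  simp only [Finset.range_eq_Ico]
  rw [← h2]
  refine Finset.sum_congr rfl (fun i hi => ?_)
  have hi' : i ≤ M := by
    simp only [Finset.mem_Ico] at hi; omega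
  rw [Finset.sum_Ico_eq_sum_range, show M+1-i = (M-i)+1 from by omega]
  have hTs : ∑ s ∈ Finset.range ((M-i)+1),
      (Nat.choose (2*(j+M)+1) (2*j) : ℚ) * (Nat.choose M (i+s)) *
        (Nat.choose (2*(i+s)+2*j) ((i+s)+j)) * (a+1)^j *
        ((a+1)^i * (-2)^((i+s)-i) * (Nat.choose (i+s) i)) / 2^(3*((i+s)+j))
      = ((Nat.choose (2*(j+M)+1) (2*j) : ℚ) * (Nat.choose M i) * (a+1)^(j+i) / 8^(j+i))
        * Tsum (M-i) (j+i) := by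
    unfold Tsum
    rw [Finset.mul_sum]
    refine Finset.sum_congr rfl (fun s hs => ?_)
    have hs' : s ≤ M-i := by simpa [Nat.lt_succ_iff] using hs
    have hcm : ((Nat.choose M (i+s) : ℚ)) * (Nat.choose (i+s) i)
        = (Nat.choose M i : ℚ) * (Nat.choose (M-i) s) := by
      have h := Nat.choose_mul (n := M) (show i ≤ i+s from by omega)
      rw [show (i+s)-i = s from by omega] at h
      exact_mod_cast h
    rw [show (i+s)-i = s from by omega,
      show (2*(i+s)+2*j) = 2*((j+i)+s) from by ring,
      show ((i+s)+j) = (j+i)+s from by ring,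
      show (2:ℚ)^(3*((j+i)+s)) = 8^(j+i) * 8^s from by
        rw [pow_mul, show ((2:ℚ)^3) = 8 from by norm_num, pow_add],
      show ((-1):ℚ)^s / 4^s = (-2)^s / 8^s from by
        rw [← div_pow, ← div_pow, show ((-1):ℚ)/4 = (-2)/8 from by norm_num]]
    linear_combination ((Nat.choose (2*(j+M)+1) (2*j) : ℚ) * (Nat.choose (2*((j+i)+s)) ((j+i)+s)) *
      (a+1)^j * (a+1)^i * (-2)^s / (8^(j+i) * 8^s)) * hcm
  rw [hTs]
  have hnz : ((Nat.choose (j+M) (j+i) : ℚ) * 4^(M-i)) ≠ 0 := by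
    have h1 : ((Nat.choose (j+M) (j+i) : ℚ)) ≠ 0 := Nat.cast_ne_zero.mpr (Nat.choose_pos (by omega)).ne'
    positivity
  have hT : Tsum (M-i) (j+i) = ((Nat.choose (2*(M-i)) (M-i) : ℚ) * (Nat.choose (2*(j+i)) (j+i)))
      / ((Nat.choose (j+M) (j+i) : ℚ) * 4^(M-i)) := by
    have h := Tsum_eq (M-i) (j+i)
    rw [show (M-i)+(j+i) = j+M from by omega] at h
    rw [eq_div_iff hnz]
    linear_combination h
  rw [hT]
  unfold Mid
  rw [show j+M-j = M from by omega]

theorem boros_moll_double_eq_single (m : ℕ) (a : ℚ) :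
    (∑ j ∈ Finset.range (m+1), ∑ k ∈ Finset.range (m-j+1),
      (Nat.choose (2*m+1) (2*j) : ℚ) * (Nat.choose (m-j) k) *
        (Nat.choose (2*k+2*j) (k+j)) * (a+1)^j * (a-1)^k / 2^(3*(k+j))) =
    (∑ k ∈ Finset.range (m+1),
      (2:ℚ)^k * (Nat.choose (2*m-2*k) (m-k)) * (Nat.choose (m+k) k) * (a+1)^k) / 2^(2*m) := by
  have hstep1 : (∑ j ∈ Finset.range (m+1), ∑ k ∈ Finset.range (m-j+1),
      (Nat.choose (2*m+1) (2*j) : ℚ) * (Nat.choose (m-j) k) *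
        (Nat.choose (2*k+2*j) (k+j)) * (a+1)^j * (a-1)^k / 2^(3*(k+j)))
      = ∑ j ∈ Finset.range (m+1), ∑ i ∈ Finset.range (m-j+1), Mid m a j i := by
    refine Finset.sum_congr rfl (fun j hj => ?_)
    have hj' : j ≤ m := by simpa [Nat.lt_succ_iff] using hj
    obtain ⟨M, rfl⟩ : ∃ M, m = j + M := ⟨m-j, by omega⟩
    rw [show j+M-j = M from by omega]
    exact step1 M j a
  rw [hstep1]
  -- triangle reindex
  have hstep2 : ∑ j ∈ Finset.range (m+1), ∑ i ∈ Finset.range (m-j+1), Mid m a j i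
      = ∑ n ∈ Finset.range (m+1), ∑ j ∈ Finset.range (n+1), Mid m a j (n-j) := by
    have hcomm := Finset.sum_Ico_Ico_comm 0 (m+1) (fun j n => Mid m a j (n-j))
    have hL : ∑ j ∈ Finset.range (m+1), ∑ i ∈ Finset.range (m-j+1), Mid m a j i
        = ∑ j ∈ Finset.Ico 0 (m+1), ∑ n ∈ Finset.Ico j (m+1), Mid m a j (n-j) := by
      rw [← Finset.range_eq_Ico]
      refine Finset.sum_congr rfl (fun j hj => ?_)
      have hj' : j ≤ m := by simpa [Nat.lt_succ_iff] using hj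
      rw [Finset.sum_Ico_eq_sum_range, show m+1-j = (m-j)+1 from by omega]
      exact Finset.sum_congr rfl (fun i _ => by rw [show j+i-j = i from by omega])
    rw [hL, hcomm, ← Finset.range_eq_Ico]
    simp only [← Finset.range_eq_Ico]
  rw [hstep2]
  -- per-n evaluation
  have hstep3 : ∀ n ∈ Finset.range (m+1), ∑ j ∈ Finset.range (n+1), Mid m a j (n-j)
      = ((2:ℚ)^n * (Nat.choose (2*m-2*n) (m-n)) * (Nat.choose (m+n) n) * (a+1)^n) / 2^(2*m) := by
    intro n hn
    have hn' : n ≤ m := by simpa [Nat.lt_succ_iff] using hn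
    have hmid : ∀ j ∈ Finset.range (n+1), Mid m a j (n-j)
        = ((Nat.choose (2*m+1) (2*j) : ℚ) * (Nat.choose (m-j) (n-j))) *
          ((a+1)^n / 8^n * ((Nat.choose (2*(m-n)) (m-n) : ℚ) * (Nat.choose (2*n) n)
            / ((Nat.choose m n : ℚ) * 4^(m-n)))) := by
      intro j hjn
      have hj' : j ≤ n := by simpa [Nat.lt_succ_iff] using hjn
      unfold Mid
      rw [show j+(n-j) = n from by omega, show m-j-(n-j) = m-n from by omega]
      ring
    rw [Finset.sum_congr rfl hmid, ← Finset.sum_mul, I_final m n hn']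
    obtain ⟨e, rfl⟩ : ∃ e, m = n + e := ⟨m-n, by omega⟩
    have hcm : (Nat.choose (n+e+n) (2*n) : ℚ) * (Nat.choose (2*n) n)
        = (Nat.choose (n+e+n) n : ℚ) * (Nat.choose (n+e) n) := by
      have h := Nat.choose_mul (n := n+e+n) (show n ≤ 2*n by omega)
      rw [show n+e+n-n = n+e from by omega, show 2*n-n = n from by omega] at h
      exact_mod_cast h
    have hw : ((Nat.choose (n+e) n : ℚ)) ≠ 0 := Nat.cast_ne_zero.mpr (Nat.choose_pos (by omega)).ne'
    rw [show n+e-n = e from by omega, show 2*(n+e)-2*n = 2*e from by omega]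
    rw [show (8:ℚ)^n = 2^(3*n) from by rw [pow_mul]; norm_num,
      show (4:ℚ)^n = 2^(2*n) from by rw [pow_mul]; norm_num,
      show (4:ℚ)^e = 2^(2*e) from by rw [pow_mul]; norm_num]
    field_simp
    linear_combination ((a+1)^n * (Nat.choose (2*e) e : ℚ) * 2^(4*n+2*e)) * hcm
  rw [Finset.sum_congr rfl hstep3, ← Finset.sum_div]
end

section
/- For all nonnegative integers m, ∑_{k=0}^{m} 2^{-2k} * C(2k, k) * C(2m-k, m) = ∑_{k=0}^{m} 2^{-2k} * C(2k, k) * C(2m+1, 2k). -/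
open Finset Polynomial

/-- auxiliary sum -/
def S1 (m r : ℕ) : ℕ := ∑ j ∈ range (r+1), 4^j * (m+j).choose j * (2*(r-j)).choose (r-j)

lemma S1_zero (m : ℕ) : S1 m 0 = 1 := by simp [S1]

lemma S1_base_rec (r : ℕ) : S1 0 (r+1) = (2*(r+1)).choose (r+1) + 4 * S1 0 r := by
  rw [S1, Finset.sum_range_succ']
  simp only [Nat.succ_sub_succ, Nat.zero_add, Nat.choose_self, Nat.sub_zero]
  rw [S1, Finset.mul_sum]
  rw [Nat.add_comm]
  congr 1
  · simp
  · refine Finset.sum_congr rfl fun j hj => ?_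
    simp [pow_succ]
    ring

lemma S1_rec (m r : ℕ) : S1 (m+1) (r+1) = S1 m (r+1) + 4 * S1 (m+1) r := by
  rw [S1, S1, Finset.sum_range_succ', Finset.sum_range_succ'
    (fun j => 4^j * (m+j).choose j * (2*(r+1-j)).choose (r+1-j))]
  have key : ∀ j, 4^(j+1) * (m+1+(j+1)).choose (j+1) * (2*(r+1-(j+1))).choose (r+1-(j+1))
      = 4^(j+1) * (m+(j+1)).choose (j+1) * (2*(r+1-(j+1))).choose (r+1-(j+1))
        + 4 * (4^j * (m+1+j).choose j * (2*(r-j)).choose (r-j)) := by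
    intro j
    simp only [Nat.succ_sub_succ]
    rw [show m+1+(j+1) = (m+j+1)+1 by ring, Nat.choose_succ_succ',
      show m+(j+1) = m+j+1 by ring, show m+1+j = m+j+1 by ring]
    ring
  calc (∑ j ∈ range (r+1), 4^(j+1) * (m+1+(j+1)).choose (j+1) *
          (2*(r+1-(j+1))).choose (r+1-(j+1)))
        + 4^0 * (m+1+0).choose 0 * (2*(r+1-0)).choose (r+1-0)
      = ((∑ j ∈ range (r+1), 4^(j+1) * (m+(j+1)).choose (j+1) *
          (2*(r+1-(j+1))).choose (r+1-(j+1)))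
        + ∑ j ∈ range (r+1), 4 * (4^j * (m+1+j).choose j * (2*(r-j)).choose (r-j)))
        + 4^0 * (m+0).choose 0 * (2*(r+1-0)).choose (r+1-0) := by
        rw [← Finset.sum_add_distrib]
        simp only [Nat.choose_zero_right]
        congr 1
        exact Finset.sum_congr rfl fun j _ => key j
  _ = _ := by
        rw [S1, Finset.mul_sum]
        ring

lemma fs (n : ℕ) : (Nat.factorial (n+1) : ℚ) = (n+1) * Nat.factorial n := by
  rw [Nat.factorial_succ]; push_cast; ring

lemma S1_closed : ∀ m r : ℕ,
    (S1 m r : ℚ) * ((m+r).factorial * ((2*m+1).factorial * r.factorial))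
      = (2*m+2*r+1).factorial * m.factorial := by
  intro m
  induction m with
  | zero =>
    intro r
    induction r with
    | zero => simp [S1_zero]
    | succ r IH =>
      have hc : ((2*(r+1)).choose (r+1) : ℚ) * ((r+1).factorial * (r+1).factorial)
          = (2*(r+1)).factorial := by
        have := Nat.add_choose_mul_factorial_mul_factorial (r+1) (r+1)
        rw [show (r+1)+(r+1) = 2*(r+1) by ring] at this
        push_cast [← this]
        ring
      rw [S1_base_rec]
      push_cast
      rw [show (0:ℕ)+(r+1) = r+1 by ring, show 2*0+2*(r+1)+1 = ((2*r+1)+1)+1 by ring,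
        show (2*(r+1) : ℕ) = ((2*r+1)+1) by ring]
      rw [fs ((2*r+1)+1), fs (2*r+1), fs r]
      rw [show (2*(r+1) : ℕ) = ((2*r+1)+1) by ring] at hc
      rw [fs ((2*r+1))] at hc
      rw [fs r] at hc
      rw [show (0:ℕ)+r = r by ring, show 2*0+2*r+1 = 2*r+1 by ring] at IH
      push_cast at *
      simp only [Nat.factorial_zero, Nat.factorial_one, Nat.cast_one, mul_one, one_mul] at *
      linear_combination hc + (4*(r+1)^2 : ℚ) * IH
  | succ m IHm =>
    intro r
    induction r with
    | zero =>
      simp only [S1_zero, Nat.factorial_zero]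
      rw [show (m+1)+0 = m+1 by ring, show 2*(m+1)+2*0+1 = 2*(m+1)+1 by ring]
      push_cast
      ring
    | succ r IHr =>
      have IH1 := IHm (r+1)
      have IH2 := IHr
      rw [S1_rec]
      push_cast
      -- normalize indices in the goal
      rw [show (m+1)+(r+1) = ((m+r)+1)+1 by ring,
        show 2*(m+1)+1 = ((2*m+1)+1)+1 by ring,
        show 2*(m+1)+2*(r+1)+1 = (((2*m+2*r+2)+1)+1)+1 by ring]
      rw [fs ((m+r)+1), fs (m+r), fs ((2*m+1)+1), fs (2*m+1),
        fs (((2*m+2*r+2)+1)+1), fs ((2*m+2*r+2)+1), fs (2*m+2*r+2), fs r, fs m]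
      rw [show m+(r+1) = (m+r)+1 by ring, show 2*m+2*(r+1)+1 = (2*m+2*r+2)+1 by ring] at IH1
      rw [fs (m+r), fs (2*m+2*r+2), fs r] at IH1
      rw [show (m+1)+r = (m+r)+1 by ring, show 2*(m+1)+1 = ((2*m+1)+1)+1 by ring,
        show 2*(m+1)+2*r+1 = (2*m+2*r+2)+1 by ring] at IH2
      rw [fs (m+r), fs ((2*m+1)+1), fs (2*m+1), fs (2*m+2*r+2), fs m] at IH2
      push_cast at *
      linear_combination ((m+r+2)*(2*m+2)*(2*m+3) : ℚ) * IH1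
        + (4*(m+r+2)*(r+1) : ℚ) * IH2


lemma S1_diag (m : ℕ) : (S1 m m : ℚ) = ((4*m+1).choose (2*m) : ℚ) := by
  have h1 := S1_closed m m
  rw [show m+m = 2*m by ring, show 2*m+2*m+1 = 4*m+1 by ring] at h1
  have h2 : ((4*m+1).choose (2*m) : ℚ) * ((2*m).factorial * ((2*m+1).factorial * m.factorial))
      = (4*m+1).factorial * m.factorial := by
    have h := Nat.choose_mul_factorial_mul_factorial (show 2*m ≤ 4*m+1 by omega)
    rw [show 4*m+1-2*m = 2*m+1 by omega] at h
    push_cast [← h]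
    ring
  have hne : (((2*m).factorial : ℚ) * ((2*m+1).factorial * m.factorial)) ≠ 0 := by
    have : ((2*m).factorial * ((2*m+1).factorial * m.factorial) : ℕ) ≠ 0 :=
      Nat.mul_ne_zero (Nat.factorial_ne_zero _)
        (Nat.mul_ne_zero (Nat.factorial_ne_zero _) (Nat.factorial_ne_zero _))
    exact_mod_cast Nat.cast_ne_zero.mpr this
  exact mul_right_cancel₀ hne (h1.trans h2.symm)

open Polynomial in
lemma poly_expand (n : ℕ) :
    (2*n).choose n = ∑ j ∈ range (n+1), 2^(j-(n-j)) * (j.choose (n-j)) * (n.choose j) := by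
  have h0 : ((X + 1 : ℕ[X])^(2*n)).coeff n = (2*n).choose n :=
    coeff_X_add_one_pow ℕ (2*n) n
  have hC2 : (C 2 : ℕ[X]) = 2 := map_ofNat C 2
  have h1 : (X + 1 : ℕ[X])^(2*n) = (X*(X + C 2) + 1)^n := by
    rw [pow_mul, hC2]; ring_nf
  rw [h1, add_pow, finset_sum_coeff] at h0
  rw [← h0]
  refine Finset.sum_congr rfl fun j hj => ?_
  have hjn : j ≤ n := by simpa using Nat.lt_succ_iff.mp (Finset.mem_range.mp hj)
  obtain ⟨d, rfl⟩ : ∃ d, n = d + j := ⟨n - j, by omega⟩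
  rw [one_pow, mul_pow, mul_one, mul_assoc]
  rw [coeff_X_pow_mul]
  rw [← Polynomial.C_eq_natCast, Polynomial.coeff_mul_C, coeff_X_add_C_pow]
  rw [show d + j - j = d by omega]
  push_cast [Nat.cast_id]
  ring

lemma L2nat (m : ℕ) :
    ∑ k ∈ range (m+1), 4^(m-k) * (2*k).choose k * (2*m+1).choose (2*k)
      = (4*m+1).choose (2*m) := by
  have h := poly_expand (2*m+1)
  rw [← Finset.sum_range_reflect] at h
  -- h : (4m+2).choose (2m+1) = ∑ j ∈ range (2m+2), f (2m+1 - j)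
  have h2 : ∑ j ∈ range (2*m+1+1),
      2^((2*m+1+1-1-j)-((2*m+1)-(2*m+1+1-1-j))) *
        ((2*m+1+1-1-j).choose ((2*m+1)-(2*m+1+1-1-j))) *
        ((2*m+1).choose (2*m+1+1-1-j))
      = ∑ j ∈ range (m+1), 2 * (4^(m-j) * (2*j).choose j * (2*m+1).choose (2*j)) := by
    rw [← Finset.sum_subset (Finset.range_subset_range.mpr (show m+1 ≤ 2*m+1+1 by omega))]
    · refine Finset.sum_congr rfl fun j hj => ?_
      have hjm : j ≤ m := Nat.lt_succ_iff.mp (Finset.mem_range.mp hj)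
      rw [show 2*m+1+1-1-j = 2*m+1-j by omega,
        show (2*m+1)-(2*m+1-j) = j by omega,
        show (2*m+1-j)-j = 2*(m-j)+1 by omega]
      have hpow : (2:ℕ)^(2*(m-j)+1) = 2 * 4^(m-j) := by
        rw [pow_succ, pow_mul]; ring
      have hsymm : (2*m+1).choose (2*m+1-j) = (2*m+1).choose j := by
        rw [show 2*m+1-j = (2*m+1)-j by omega]
        exact Nat.choose_symm (by omega)
      have hcm := Nat.choose_mul (n := 2*m+1) (show j ≤ 2*j by omega)
      rw [show 2*j-j = j by omega] at hcm
      rw [hpow, hsymm]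
      calc 2 * 4^(m-j) * (2*m+1-j).choose j * (2*m+1).choose j
          = 2 * 4^(m-j) * ((2*m+1).choose j * ((2*m+1)-j).choose j) := by
            rw [show (2*m+1)-j = 2*m+1-j by omega]; ring
        _ = 2 * (4^(m-j) * (2*j).choose j * (2*m+1).choose (2*j)) := by
            rw [← hcm]; ring
    · intro j hj hj2
      have h1 : m+1 ≤ j := by simpa using hj2
      have h2 : j < 2*m+2 := by simp at hj; omega
      rw [show 2*m+1+1-1-j = 2*m+1-j by omega]
      have : (2*m+1-j).choose ((2*m+1)-(2*m+1-j)) = 0 := by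
        apply Nat.choose_eq_zero_of_lt; omega
      rw [this]
      ring
  rw [h2, ← Finset.mul_sum] at h
  have h3 : (2*(2*m+1)).choose (2*m+1) = 2 * ((4*m+1).choose (2*m)) := by
    have hs := Nat.choose_symm_half (2*m)
    rw [show 2*(2*m)+1 = 4*m+1 by ring] at hs
    rw [show 2*(2*m+1) = (4*m+1)+1 by ring, Nat.choose_succ_succ']
    omega
  rw [h3] at h
  omega

lemma L1nat (m : ℕ) :
    ∑ k ∈ range (m+1), 4^(m-k) * (2*k).choose k * (2*m-k).choose m = S1 m m := by
  rw [S1, ← Finset.sum_range_reflect]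
  refine Finset.sum_congr rfl fun k hk => ?_
  have hkm : k ≤ m := Nat.lt_succ_iff.mp (Finset.mem_range.mp hk)
  rw [show m+1-1-k = m-k by omega, show m - (m-k) = k by omega,
    show 2*m-(m-k) = m+k by omega, Nat.choose_symm_add]
  ring

theorem boros_moll_at_one (m : ℕ) :
    (∑ k ∈ Finset.range (m+1),
      (2:ℚ)^(-(2*k : ℤ)) * (Nat.choose (2*k) k) * (Nat.choose (2*m-k) m)) =
    (∑ k ∈ Finset.range (m+1),
      (2:ℚ)^(-(2*k : ℤ)) * (Nat.choose (2*k) k) * (Nat.choose (2*m+1) (2*k))) := by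
  have hz : ∀ k : ℕ, k ≤ m → (4:ℚ)^m * (2:ℚ)^(-(2*k : ℤ)) = (4:ℚ)^(m-k) := by
    intro k hk
    have : (2:ℚ)^(-(2*k : ℤ)) = ((4:ℚ)^k)⁻¹ := by
      rw [zpow_neg, show ((2*k : ℤ)) = ((2*k : ℕ) : ℤ) by push_cast; ring,
        zpow_natCast, pow_mul]
      norm_num
    rw [this, show (4:ℚ)^m = 4^(m-k) * 4^k by rw [← pow_add]; congr 1; omega]
    field_simp
  have hmain : (4:ℚ)^m * (∑ k ∈ Finset.range (m+1),
      (2:ℚ)^(-(2*k : ℤ)) * (Nat.choose (2*k) k) * (Nat.choose (2*m-k) m))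
      = (4:ℚ)^m * (∑ k ∈ Finset.range (m+1),
      (2:ℚ)^(-(2*k : ℤ)) * (Nat.choose (2*k) k) * (Nat.choose (2*m+1) (2*k))) := by
    rw [Finset.mul_sum, Finset.mul_sum]
    have e1 : ∀ s : Finset ℕ, s = Finset.range (m+1) →
        ∑ k ∈ s, (4:ℚ)^m * ((2:ℚ)^(-(2*k : ℤ)) * (Nat.choose (2*k) k) * (Nat.choose (2*m-k) m))
        = ((∑ k ∈ range (m+1), 4^(m-k) * (2*k).choose k * (2*m-k).choose m : ℕ) : ℚ) := by
      rintro s rfl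
      push_cast
      refine Finset.sum_congr rfl fun k hk => ?_
      have hkm : k ≤ m := Nat.lt_succ_iff.mp (Finset.mem_range.mp hk)
      rw [← mul_assoc, ← mul_assoc, hz k hkm]
    have e2 : ∀ s : Finset ℕ, s = Finset.range (m+1) →
        ∑ k ∈ s, (4:ℚ)^m * ((2:ℚ)^(-(2*k : ℤ)) * (Nat.choose (2*k) k) * (Nat.choose (2*m+1) (2*k)))
        = ((∑ k ∈ range (m+1), 4^(m-k) * (2*k).choose k * (2*m+1).choose (2*k) : ℕ) : ℚ) := by
      rintro s rfl
      push_cast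
      refine Finset.sum_congr rfl fun k hk => ?_
      have hkm : k ≤ m := Nat.lt_succ_iff.mp (Finset.mem_range.mp hk)
      rw [← mul_assoc, ← mul_assoc, hz k hkm]
    rw [e1 _ rfl, e2 _ rfl, L2nat, L1nat, S1_diag]
  exact mul_left_cancel₀ (by positivity) hmain
end

section
/- For m ≥ 2 and 1 ≤ i ≤ m-1, the recurrence i(i+1) d_{i+1}(m) = i(2m+1) d_i(m) - (m-i+1)(m+i) d_{i-1}(m) holds. -/
open Finset

/-- The Boros-Moll coefficient `d_i(m)`. -/
def bmCoeff (m i : ℕ) : ℚ :=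
  (∑ k ∈ Finset.Icc i m,
    (2:ℚ)^k * (Nat.choose (2*m-2*k) (m-k)) * (Nat.choose (m+k) k) * (Nat.choose k i)) / 2^(2*m)

/-- The rescaled coefficient `D_i(m)`. -/
def bmD (m i : ℕ) : ℚ :=
  (Nat.choose (2*m) (m-i)) * (Nat.factorial m) * (Nat.factorial i) *
    (Nat.factorial (m-i)) * 2^i * bmCoeff m i

/-- Auxiliary: the summand weight `c_k = 2^k C(2m-2k, m-k) C(m+k, k)` as a rational. -/
def bmc (m k : ℕ) : ℚ := (2:ℚ)^k * (Nat.choose (2*m-2*k) (m-k)) * (Nat.choose (m+k) k)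

lemma central_step (n : ℕ) :
    ((Nat.choose (2*n+2) (n+1) : ℚ)) * (n+1) = 2*(2*n+1)*(Nat.choose (2*n) n) := by
  have h1 := Nat.add_one_mul_choose_eq (2*n+1) n
  have h2 := Nat.add_one_mul_choose_eq (2*n) n
  have h3 : Nat.choose (2*n+1) (n+1) = Nat.choose (2*n+1) n := by
    rw [← Nat.choose_symm (by omega : n + 1 ≤ 2*n+1)]
    congr 1
    omega
  rw [h3] at h2
  have hne : ((n:ℚ)+1) ≠ 0 := by positivity
  apply mul_left_cancel₀ hne
  have h1q : ((2*n+1+1 : ℕ):ℚ) * (Nat.choose (2*n+1) n) = (Nat.choose (2*n+1+1) (n+1)) * ((n:ℚ)+1) := by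
    exact_mod_cast congrArg (Nat.cast : ℕ → ℚ) h1
  have h2q : ((2*n+1 : ℕ):ℚ) * (Nat.choose (2*n) n) = (Nat.choose (2*n+1) n) * ((n:ℚ)+1) := by
    exact_mod_cast congrArg (Nat.cast : ℕ → ℚ) h2
  have e : (2*n+1+1) = 2*n+2 := by omega
  rw [e] at h1q
  push_cast at h1q h2q ⊢
  linear_combination (-(n:ℚ)-1) * h1q - 2*((n:ℚ)+1) * h2q

lemma bmc_ratio (m k : ℕ) (hk1 : 1 ≤ k) (hkm : k ≤ m) :
    bmc m (k-1) * ((m:ℚ)-k+1) * ((m:ℚ)+k) = bmc m k * k * (2*(m:ℚ)-2*k+1) := by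
  obtain ⟨j, rfl⟩ : ∃ j, k = j + 1 := ⟨k-1, by omega⟩
  obtain ⟨n, rfl⟩ : ∃ n, m = n + j + 1 := ⟨m - j - 1, by omega⟩
  unfold bmc
  have e0 : j + 1 - 1 = j := by omega
  have e1 : 2*(n+j+1) - 2*(j+1) = 2*n := by omega
  have e2 : (n+j+1) - (j+1) = n := by omega
  have e3 : 2*(n+j+1) - 2*j = 2*n+2 := by omega
  have e4 : (n+j+1) - j = n+1 := by omega
  have e5 : (n+j+1) + j = n+2*j+1 := by omega
  have e6 : (n+j+1) + (j+1) = (n+2*j+1)+1 := by omega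
  rw [e0, e1, e2, e3, e4, e5, e6]
  have hc1 := Nat.add_one_mul_choose_eq (n+2*j+1) j
  have hc1q : ((n+2*j+1+1 : ℕ):ℚ) * (Nat.choose (n+2*j+1) j)
      = (Nat.choose (n+2*j+1+1) (j+1)) * ((j:ℚ)+1) := by
    exact_mod_cast congrArg (Nat.cast : ℕ → ℚ) hc1
  have hc2 := central_step n
  push_cast at hc1q hc2 ⊢
  linear_combination ((2:ℚ)^j * (Nat.choose (n+2*j+1) j) * ((n:ℚ)+2*(j:ℚ)+2)) * hc2
    + ((2:ℚ)^j * 2 * (2*(n:ℚ)+1) * (Nat.choose (2*n) n)) * hc1q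

lemma term_eq (m i k : ℕ) (hi1 : 1 ≤ i) (hik : i ≤ k) (hkm : k ≤ m) :
    bmc m k * ((i:ℚ)*((i:ℚ)+1)*(Nat.choose k (i+1)) - (i:ℚ)*(2*(m:ℚ)+1)*(Nat.choose k i)
      + ((m:ℚ)-i+1)*((m:ℚ)+i)*(Nat.choose k (i-1)))
    = bmc m k * ((m:ℚ)-k)*((m:ℚ)+k+1)*(Nat.choose k (i-1))
      - bmc m (k-1) * ((m:ℚ)-((k-1:ℕ):ℚ))*((m:ℚ)+((k-1:ℕ):ℚ)+1)*((Nat.choose (k-1) (i-1)):ℚ) := by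
  obtain ⟨a, rfl⟩ : ∃ a, i = a + 1 := ⟨i-1, by omega⟩
  obtain ⟨b, rfl⟩ : ∃ b, k = b + 1 := ⟨k-1, by omega⟩
  have hab : a ≤ b := by omega
  simp only [Nat.add_sub_cancel]
  have h1n := Nat.choose_succ_right_eq (b+1) (a+1)
  have h2n := Nat.choose_succ_right_eq (b+1) a
  have h4n := Nat.add_one_mul_choose_eq b a
  have h1 : ((Nat.choose (b+1) (a+1+1)):ℚ) * ((a:ℚ)+1+1)
      = (Nat.choose (b+1) (a+1)) * ((b:ℚ) - a) := by
    have := congrArg (Nat.cast : ℕ → ℚ) h1n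
    have hs : (b + 1 - (a + 1)) = b - a := by omega
    rw [hs] at this
    push_cast [Nat.cast_sub hab] at this
    linarith [this]
  have h2 : ((Nat.choose (b+1) (a+1)):ℚ) * ((a:ℚ)+1)
      = (Nat.choose (b+1) a) * ((b:ℚ) - a + 1) := by
    have := congrArg (Nat.cast : ℕ → ℚ) h2n
    have hs : (b + 1 - a) = (b - a) + 1 := by omega
    rw [hs] at this
    push_cast [Nat.cast_sub hab] at this
    linarith [this]
  have h4 : ((b:ℚ)+1) * ((Nat.choose b a):ℚ) = (Nat.choose (b+1) (a+1)) * ((a:ℚ)+1) := by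
    exact_mod_cast congrArg (Nat.cast : ℕ → ℚ) h4n
  have h3 := bmc_ratio m (b+1) (by omega) hkm
  simp only [Nat.add_sub_cancel] at h3
  push_cast at h3 ⊢
  linear_combination (bmc m (b+1) * ((a:ℚ)+1)) * h1
    - (bmc m (b+1) * ((b:ℚ)+1+((a:ℚ)+1))) * h2
    + ((Nat.choose b a):ℚ) * h3
    + (bmc m (b+1) * (2*(m:ℚ)-2*((b:ℚ)+1)+1)) * h4

theorem bmCoeff_recurrence (m i : ℕ) (hm : 2 ≤ m) (hi1 : 1 ≤ i) (hi2 : i ≤ m - 1) :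
    (i : ℚ) * (i+1) * bmCoeff m (i+1) =
      (i : ℚ) * (2*m+1) * bmCoeff m i - ((m:ℚ)-i+1) * ((m:ℚ)+i) * bmCoeff m (i-1) := by
  have him : i + 1 ≤ m := by omega
  set g : ℕ → ℚ := fun k => bmc m k * ((m:ℚ)-k)*((m:ℚ)+k+1)*(Nat.choose k (i-1)) with hg
  set A : ℕ → ℚ := fun k => bmc m k * ((i:ℚ)*((i:ℚ)+1)*(Nat.choose k (i+1))
      - (i:ℚ)*(2*(m:ℚ)+1)*(Nat.choose k i)
      + ((m:ℚ)-i+1)*((m:ℚ)+i)*(Nat.choose k (i-1))) with hA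
  have key0 : ∑ k ∈ Icc (i-1) m, A k = 0 := by
    have hbase : A (i-1) = g (i-1) := by
      simp only [hA, hg]
      rw [Nat.choose_eq_zero_of_lt (by omega : i - 1 < i + 1),
        Nat.choose_eq_zero_of_lt (by omega : i - 1 < i), Nat.choose_self]
      push_cast [Nat.cast_sub hi1]
      ring
    rw [← Finset.Ico_add_one_right_eq_Icc, Finset.sum_Ico_eq_sum_range]
    have hN : m + 1 - (i-1) = (m-i+1) + 1 := by omega
    rw [hN, Finset.sum_range_succ']
    have hstep : ∀ j ∈ Finset.range (m-i+1), A (i-1 + (j+1)) = g (i-1+(j+1)) - g (i-1+j) := by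
      intro j hj
      simp only [Finset.mem_range] at hj
      have hk : i - 1 + (j+1) = i + j := by omega
      rw [hk]
      have hte := term_eq m i (i+j) hi1 (by omega) (by omega)
      simp only [hA, hg]
      rw [hte]
      have hk2 : i + j - 1 = i - 1 + j := by omega
      rw [hk2]
    rw [Finset.sum_congr rfl hstep, Finset.sum_range_sub (fun j => g (i-1+j))]
    simp only [Nat.add_zero]
    rw [hbase]
    have hm' : i - 1 + (m - i + 1) = m := by omega
    rw [hm']
    have hgm : g m = 0 := by simp [hg]
    rw [hgm]
    ring
  have e1 : ∑ k ∈ Icc (i+1) m, bmc m k * (Nat.choose k (i+1) : ℚ)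
      = ∑ k ∈ Icc (i-1) m, bmc m k * (Nat.choose k (i+1) : ℚ) := by
    apply Finset.sum_subset (Finset.Icc_subset_Icc (by omega) le_rfl)
    intro x hx hnx
    simp only [Finset.mem_Icc] at hx hnx
    rw [Nat.choose_eq_zero_of_lt (by omega)]
    simp
  have e2 : ∑ k ∈ Icc i m, bmc m k * (Nat.choose k i : ℚ)
      = ∑ k ∈ Icc (i-1) m, bmc m k * (Nat.choose k i : ℚ) := by
    apply Finset.sum_subset (Finset.Icc_subset_Icc (by omega) le_rfl)
    intro x hx hnx
    simp only [Finset.mem_Icc] at hx hnx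
    rw [Nat.choose_eq_zero_of_lt (by omega)]
    simp
  have split : ∑ k ∈ Icc (i-1) m, A k
      = (i:ℚ)*((i:ℚ)+1) * (∑ k ∈ Icc (i-1) m, bmc m k * (Nat.choose k (i+1) : ℚ))
        - (i:ℚ)*(2*(m:ℚ)+1) * (∑ k ∈ Icc (i-1) m, bmc m k * (Nat.choose k i : ℚ))
        + ((m:ℚ)-i+1)*((m:ℚ)+i) * (∑ k ∈ Icc (i-1) m, bmc m k * (Nat.choose k (i-1) : ℚ)) := by
    rw [Finset.mul_sum, Finset.mul_sum, Finset.mul_sum, ← Finset.sum_sub_distrib,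
      ← Finset.sum_add_distrib]
    exact Finset.sum_congr rfl fun k _ => by simp only [hA]; ring
  have final : (i:ℚ)*((i:ℚ)+1) * (∑ k ∈ Icc (i+1) m, bmc m k * (Nat.choose k (i+1) : ℚ))
      = (i:ℚ)*(2*(m:ℚ)+1) * (∑ k ∈ Icc i m, bmc m k * (Nat.choose k i : ℚ))
        - ((m:ℚ)-i+1)*((m:ℚ)+i) * (∑ k ∈ Icc (i-1) m, bmc m k * (Nat.choose k (i-1) : ℚ)) := by
    rw [e1, e2]
    linear_combination key0 - split
  have hsum : ∀ j : ℕ, bmCoeff m j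
      = (∑ k ∈ Icc j m, bmc m k * (Nat.choose k j : ℚ)) / 2^(2*m) := by
    intro j
    unfold bmCoeff bmc
    rfl
  have hD : ((2:ℚ)^(2*m)) ≠ 0 := by positivity
  rw [hsum, hsum, hsum, ← mul_div_assoc, ← mul_div_assoc, ← mul_div_assoc, ← sub_div,
    div_eq_div_iff hD hD]
  linear_combination ((2:ℚ)^(2*m)) * final
end

section
/- For m ≥ 1 and 1 ≤ i ≤ m-1, define D_i(m) = C(2m, m-i) * m! * i! * (m-i)! * 2^i * d_i(m). Then (1/2)(m+i+1) D_{i+1}(m) + 2(m-i+1) D_{i-1}(m) = (2m+1) D_i(m). -/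
open Finset

/-- The inner Boros-Moll sum, extended over `range (m+1)`. -/
def bmS (m j : ℕ) : ℚ :=
  ∑ k ∈ Finset.range (m+1),
    (2:ℚ)^k * (Nat.choose (2*m-2*k) (m-k)) * (Nat.choose (m+k) k) * (Nat.choose k j)

/-- Gosper certificate for the telescoping proof. -/
def bmG (m i k : ℕ) : ℚ :=
  (2:ℚ)^k * (Nat.choose (2*m-2*k) (m-k)) * (Nat.choose (m+k) k) * (Nat.choose k (i-1)) *
    ((k:ℚ) - i + 1) * (2*(m:ℚ)+1-2*k)

lemma bmCoeff_eq (m j : ℕ) : bmCoeff m j = bmS m j / 2^(2*m) := by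
  unfold bmCoeff bmS
  congr 1
  refine Finset.sum_subset ?_ ?_
  · intro k hk
    simp only [Finset.mem_Icc, Finset.mem_range] at *
    omega
  · intro k hk hk'
    simp only [Finset.mem_Icc, Finset.mem_range] at *
    have : k < j := by omega
    rw [Nat.choose_eq_zero_of_lt this]
    ring

lemma bmL4 (i k : ℕ) (hi : 1 ≤ i) :
    (Nat.choose k i : ℚ) * i = (Nat.choose k (i-1)) * ((k:ℚ) - i + 1) := by
  rcases lt_or_ge k (i-1) with h | h
  · rw [Nat.choose_eq_zero_of_lt h, Nat.choose_eq_zero_of_lt (by omega)]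
    ring
  · have hn := Nat.choose_succ_right_eq k (i-1)
    have hi' : i - 1 + 1 = i := by omega
    rw [hi'] at hn
    have hc : ((k - (i-1) : ℕ) : ℚ) = (k:ℚ) - i + 1 := by
      rw [Nat.cast_sub h, Nat.cast_sub hi]
      push_cast; ring
    have := congrArg (fun n : ℕ => (n : ℚ)) hn
    push_cast at this
    rw [hc] at this
    linarith [this]

lemma bmL5 (i k : ℕ) :
    (Nat.choose k (i+1) : ℚ) * ((i:ℚ)+1) = (Nat.choose k i) * ((k:ℚ) - i) := by
  rcases lt_or_ge k i with h | h
  · rw [Nat.choose_eq_zero_of_lt h, Nat.choose_eq_zero_of_lt (by omega)]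
    ring
  · have hn := Nat.choose_succ_right_eq k i
    have := congrArg (fun n : ℕ => (n : ℚ)) hn
    push_cast at this
    rw [Nat.cast_sub h] at this
    linarith [this]

lemma bmL3 (i k : ℕ) (hi : 1 ≤ i) :
    (Nat.choose (k+1) (i-1) : ℚ) * ((k:ℚ) + 2 - i) = ((k:ℚ)+1) * (Nat.choose k (i-1)) := by
  rcases lt_or_ge (k+1) (i-1) with h | h
  · rw [Nat.choose_eq_zero_of_lt h, Nat.choose_eq_zero_of_lt (by omega)]
    ring
  · have hn := Nat.choose_mul_succ_eq k (i-1)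
    have := congrArg (fun n : ℕ => (n : ℚ)) hn
    push_cast at this
    have hc : ((k + 1 - (i-1) : ℕ) : ℚ) = (k:ℚ) + 2 - i := by
      rw [Nat.cast_sub h, Nat.cast_sub hi]
      push_cast; ring
    rw [hc] at this
    linarith [this]

lemma bmL1 (m k : ℕ) (h : k < m) :
    ((m:ℚ) - k) * (Nat.choose (2*m-2*k) (m-k)) =
      2 * (2*(m:ℚ) - 2*k - 1) * (Nat.choose (2*m-2*k-2) (m-k-1)) := by
  have hn := Nat.succ_mul_centralBinom_succ (m-k-1)
  have e1 : m - k - 1 + 1 = m - k := by omega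
  rw [e1] at hn
  unfold Nat.centralBinom at hn
  have e2 : 2 * (m - k) = 2*m - 2*k := by omega
  have e3 : 2 * (m - k - 1) = 2*m - 2*k - 2 := by omega
  rw [e2, e3] at hn
  have := congrArg (fun n : ℕ => (n : ℚ)) hn
  push_cast at this
  have c1 : ((m - k : ℕ) : ℚ) = (m:ℚ) - k := by rw [Nat.cast_sub (le_of_lt h)]
  have c3 : ((2*m - 2*k - 2 : ℕ) : ℚ) = 2*(m:ℚ) - 2*k - 2 := by
    have e : (2*m - 2*k - 2 : ℕ) = 2*(m - k - 1) := by omega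
    rw [e, Nat.cast_mul, Nat.cast_sub (by omega : 1 ≤ m - k), Nat.cast_sub (le_of_lt h)]
    push_cast; ring
  rw [c1, c3] at this
  rw [this]; ring

lemma bmL2 (m k : ℕ) :
    ((k:ℚ)+1) * (Nat.choose (m+k+1) (k+1)) = ((m:ℚ)+k+1) * (Nat.choose (m+k) k) := by
  have hn := Nat.add_one_mul_choose_eq (m+k) k
  have := congrArg (fun n : ℕ => (n : ℚ)) hn
  push_cast at this
  linarith [this]

lemma bm_perk (m i k : ℕ) (hi : 1 ≤ i) (hk : k < m) :
    (2:ℚ)^k * (Nat.choose (2*m-2*k) (m-k)) * (Nat.choose (m+k) k) *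
      ((i:ℚ)*((i:ℚ)+1)*(Nat.choose k (i+1)) + ((m:ℚ)-i+1)*((m:ℚ)+i)*(Nat.choose k (i-1))
        - (2*(m:ℚ)+1)*i*(Nat.choose k i))
    = bmG m i (k+1) - bmG m i k := by
  unfold bmG
  have e1 : 2*m - 2*(k+1) = 2*m - 2*k - 2 := by omega
  have e2 : m - (k+1) = m - k - 1 := by omega
  have e3 : m + (k+1) = m + k + 1 := by omega
  rw [e1, e2, e3]
  push_cast
  have h1 := bmL1 m k hk
  have h2 := bmL2 m k
  have h3 := bmL3 i k hi
  have h4 := bmL4 i k hi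
  have h5 := bmL5 i k
  linear_combination
    (-2*(2:ℚ)^k*(Nat.choose (2*m-2*k-2) (m-k-1))*(Nat.choose (m+k+1) (k+1))*(2*(m:ℚ)-2*(k:ℚ)-1))*h3
    + (-2*(2:ℚ)^k*(Nat.choose (2*m-2*k-2) (m-k-1))*(Nat.choose k (i-1))*(2*(m:ℚ)-2*(k:ℚ)-1))*h2
    + ((2:ℚ)^k*(Nat.choose (m+k) k)*(Nat.choose k (i-1))*((m:ℚ)+(k:ℚ)+1))*h1
    + ((2:ℚ)^k*(Nat.choose (2*m-2*k) (m-k))*(Nat.choose (m+k) k)*(i:ℚ))*h5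
    + ((2:ℚ)^k*(Nat.choose (2*m-2*k) (m-k))*(Nat.choose (m+k) k)*((k:ℚ)-(i:ℚ)-(2*(m:ℚ)+1)))*h4

lemma bmG_zero (m i : ℕ) (hi : 1 ≤ i) : bmG m i 0 = 0 := by
  unfold bmG
  rcases Nat.eq_or_lt_of_le hi with h | h
  · rw [← h]
    norm_num
  · rw [Nat.choose_eq_zero_of_lt (by omega : 0 < i - 1)]
    norm_num

lemma bm_key (m i : ℕ) (hi : 1 ≤ i) (him : i + 1 ≤ m) :
    (i:ℚ)*((i:ℚ)+1)*bmS m (i+1) + ((m:ℚ)-i+1)*((m:ℚ)+i)*bmS m (i-1)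
      = (2*(m:ℚ)+1)*(i:ℚ)*bmS m i := by
  have hsum : (i:ℚ)*((i:ℚ)+1)*bmS m (i+1) + ((m:ℚ)-i+1)*((m:ℚ)+i)*bmS m (i-1)
      - (2*(m:ℚ)+1)*(i:ℚ)*bmS m i
      = ∑ k ∈ Finset.range (m+1),
          (2:ℚ)^k * (Nat.choose (2*m-2*k) (m-k)) * (Nat.choose (m+k) k) *
            ((i:ℚ)*((i:ℚ)+1)*(Nat.choose k (i+1)) + ((m:ℚ)-i+1)*((m:ℚ)+i)*(Nat.choose k (i-1))
              - (2*(m:ℚ)+1)*i*(Nat.choose k i)) := by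
    simp only [bmS, Finset.mul_sum]
    rw [← Finset.sum_add_distrib, ← Finset.sum_sub_distrib]
    exact Finset.sum_congr rfl fun k _ => by ring
  have hzero : (∑ k ∈ Finset.range (m+1),
          (2:ℚ)^k * (Nat.choose (2*m-2*k) (m-k)) * (Nat.choose (m+k) k) *
            ((i:ℚ)*((i:ℚ)+1)*(Nat.choose k (i+1)) + ((m:ℚ)-i+1)*((m:ℚ)+i)*(Nat.choose k (i-1))
              - (2*(m:ℚ)+1)*i*(Nat.choose k i))) = 0 := by
    rw [Finset.sum_range_succ]
    have tele : (∑ k ∈ Finset.range m,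
          (2:ℚ)^k * (Nat.choose (2*m-2*k) (m-k)) * (Nat.choose (m+k) k) *
            ((i:ℚ)*((i:ℚ)+1)*(Nat.choose k (i+1)) + ((m:ℚ)-i+1)*((m:ℚ)+i)*(Nat.choose k (i-1))
              - (2*(m:ℚ)+1)*i*(Nat.choose k i))) = bmG m i m - bmG m i 0 := by
      rw [← Finset.sum_range_sub (bmG m i)]
      exact Finset.sum_congr rfl fun k hk => bm_perk m i k hi (Finset.mem_range.mp hk)
    rw [tele, bmG_zero m i hi]
    have em1 : 2*m - 2*m = 0 := by omega
    have em2 : m - m = 0 := by omega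
    unfold bmG
    rw [em1, em2, Nat.choose_self]
    have h4 := bmL4 i m hi
    have h5 := bmL5 i m
    push_cast
    linear_combination ((2:ℚ)^m*(Nat.choose (m+m) m)*(i:ℚ))*h5
      + ((2:ℚ)^m*(Nat.choose (m+m) m)*((m:ℚ)-(i:ℚ)-(2*(m:ℚ)+1)))*h4
  linarith [hsum, hzero]

lemma bmD_eq' (m j : ℕ) (h : j ≤ m) :
    bmD m j * (((m+j).factorial : ℚ) * 2^(2*m)) =
      ((2*m).factorial : ℚ) * (m.factorial) * (j.factorial) * 2^j * bmS m j := by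
  rw [bmD, bmCoeff_eq]
  have hkey : (Nat.choose (2*m) (m-j) : ℚ) * ((m-j).factorial) * ((m+j).factorial)
      = ((2*m).factorial) := by
    have h1 : m - j ≤ 2*m := by omega
    have hn := Nat.choose_mul_factorial_mul_factorial h1
    have e : 2*m - (m-j) = m+j := by omega
    rw [e] at hn
    exact_mod_cast congrArg (fun n : ℕ => (n:ℚ)) hn
  have hfm : ((m-j).factorial : ℚ) ≠ 0 := by exact_mod_cast (Nat.factorial_ne_zero _)
  have hfp : ((m+j).factorial : ℚ) ≠ 0 := by exact_mod_cast (Nat.factorial_ne_zero _)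
  have h2 : ((2:ℚ)^(2*m)) ≠ 0 := by positivity
  field_simp
  linear_combination (bmS m j) * hkey

theorem bmD_recurrence (m i : ℕ) (hm : 1 ≤ m) (hi1 : 1 ≤ i) (hi2 : i ≤ m - 1) :
    (1/2 : ℚ) * ((m:ℚ)+i+1) * bmD m (i+1) + 2 * ((m:ℚ)-i+1) * bmD m (i-1) =
      (2*(m:ℚ)+1) * bmD m i := by
  have him : i + 1 ≤ m := by omega
  have hk := bm_key m i hi1 him
  have G1 := bmD_eq' m (i+1) (by omega)
  have G2 := bmD_eq' m (i-1) (by omega)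
  have G0 := bmD_eq' m i (by omega)
  have ci : ((i-1 : ℕ) : ℚ) = (i:ℚ) - 1 := by
    rw [Nat.cast_sub hi1]; norm_num
  have f1 : ((i+1).factorial : ℚ) = ((i:ℚ)+1) * (i.factorial) := by
    rw [Nat.factorial_succ]; push_cast; ring
  have f2 : (i.factorial : ℚ) = (i:ℚ) * ((i-1).factorial) := by
    exact_mod_cast (congrArg (fun n : ℕ => (n:ℚ))
      (Nat.mul_factorial_pred (show i ≠ 0 by omega))).symm
  have f3 : ((m+(i+1)).factorial : ℚ) = ((m:ℚ)+i+1) * ((m+i).factorial) := by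
    rw [show m+(i+1) = (m+i)+1 by omega, Nat.factorial_succ]; push_cast; ring
  have f4 : ((m+i).factorial : ℚ) = ((m:ℚ)+i) * ((m+(i-1)).factorial) := by
    have hn := Nat.mul_factorial_pred (show m+i ≠ 0 by omega)
    have e : m + i - 1 = m + (i-1) := by omega
    rw [e] at hn
    exact_mod_cast (congrArg (fun n : ℕ => (n:ℚ)) hn).symm
  have p1 : (2:ℚ)^(i+1) = 2^i * 2 := pow_succ 2 i
  have p2 : (2:ℚ)^i = 2^(i-1) * 2 := by
    conv_lhs => rw [show i = (i-1)+1 by omega]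
    rw [pow_succ]
  rw [f1, f3, f4, f2, p1, p2] at G1
  rw [f4, f2, p2] at G0
  have hC : (((m:ℚ)+i+1) * (((m:ℚ)+i) * ((m+(i-1)).factorial : ℚ)) * 2^(2*m)) ≠ 0 := by
    have hu : ((m+(i-1)).factorial : ℚ) > 0 := by
      exact_mod_cast Nat.factorial_pos _
    positivity
  apply mul_right_cancel₀ hC
  linear_combination ((1/2 : ℚ)*((m:ℚ)+i+1))*G1
    + (2*((m:ℚ)-i+1)*((m:ℚ)+i+1)*((m:ℚ)+i))*G2
    - ((2*(m:ℚ)+1)*((m:ℚ)+i+1))*G0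
    + (2*((2*m).factorial : ℚ)*(m.factorial)*((i-1).factorial)*2^(i-1)*((m:ℚ)+i+1))*hk
end

section
/- For m ≥ 1 and 0 ≤ i ≤ m, D_i(m) := C(2m, m-i) * m! * i! * (m-i)! * 2^i * d_i(m) equals C(2m, m-i) * ∑_{j=0}^{m-i} C(m-i, j) * (1/2)^j * (1/2)_{m-i-j} * (m+i+j)!, where (x)_n = x(x+1)⋯(x+n-1) is the rising factorial. -/
open Finset

lemma asc_half (n : ℕ) : (ascPochhammer ℚ n).eval (1/2)
    = (Nat.factorial (2*n) : ℚ) / (4^n * Nat.factorial n) := by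
  induction n with
  | zero => simp
  | succ n ih =>
    rw [ascPochhammer_succ_right]
    have h2 : 2*(n+1) = (2*n+1)+1 := by ring
    rw [h2]
    simp only [Polynomial.eval_mul, Polynomial.eval_add, Polynomial.eval_X,
      Polynomial.eval_natCast, ih, Nat.factorial_succ]
    push_cast
    have h4 : (4:ℚ)^(n+1) = 4 * 4^n := by ring
    rw [h4]
    have := Nat.factorial_ne_zero n
    field_simp
    ring

lemma term_eq_s5 (i j n : ℕ) :
    ((i+j+n).factorial : ℚ) * i.factorial * (j+n).factorial * 2^i *
      ((2:ℚ)^(i+j) * ((2*n).choose n) * ((2*i+2*j+n).choose (i+j)) * ((i+j).choose i))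
      / 2^(2*(i+j+n))
    = ((j+n).choose j : ℚ) * (1/2)^j * ((Nat.factorial (2*n) : ℚ) / (4^n * Nat.factorial n))
        * (2*i+2*j+n).factorial := by
  have e1 : 2*n - n = n := by omega
  have e2 : 2*i+2*j+n - (i+j) = i+j+n := by omega
  have e3 : i+j - i = j := by omega
  have e4 : j+n - j = n := by omega
  rw [Nat.cast_choose ℚ (show n ≤ 2*n by omega), e1,
      Nat.cast_choose ℚ (show i+j ≤ 2*i+2*j+n by omega), e2,
      Nat.cast_choose ℚ (show i ≤ i+j by omega), e3,
      Nat.cast_choose ℚ (show j ≤ j+n by omega), e4]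
  have f1 : (Nat.factorial i : ℚ) ≠ 0 := Nat.cast_ne_zero.2 (Nat.factorial_ne_zero i)
  have f2 : (Nat.factorial j : ℚ) ≠ 0 := Nat.cast_ne_zero.2 (Nat.factorial_ne_zero j)
  have f3 : (Nat.factorial n : ℚ) ≠ 0 := Nat.cast_ne_zero.2 (Nat.factorial_ne_zero n)
  have f4 : (Nat.factorial (i+j) : ℚ) ≠ 0 := Nat.cast_ne_zero.2 (Nat.factorial_ne_zero _)
  have f5 : (Nat.factorial (i+j+n) : ℚ) ≠ 0 := Nat.cast_ne_zero.2 (Nat.factorial_ne_zero _)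
  have p2 : ((2:ℚ))^(2*(i+j+n)) ≠ 0 := by positivity
  have p4 : ((4:ℚ))^n ≠ 0 := by positivity
  field_simp
  rw [show (4:ℚ)^n = 2^(2*n) by rw [show (4:ℚ) = 2^2 by norm_num, ← pow_mul]]
  rw [one_div, inv_pow]
  field_simp
  ring

theorem bmD_eq_weighted_sum (m i : ℕ) (hm : 1 ≤ m) (hi : i ≤ m) :
    bmD m i = (Nat.choose (2*m) (m-i) : ℚ) *
      ∑ j ∈ Finset.range (m-i+1),
        (Nat.choose (m-i) j : ℚ) * (1/2)^j *
          (ascPochhammer ℚ (m-i-j)).eval (1/2) * (Nat.factorial (m+i+j)) := by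
  suffices h : (Nat.factorial m : ℚ) * (Nat.factorial i) * (Nat.factorial (m-i)) * 2^i *
      bmCoeff m i = ∑ j ∈ Finset.range (m-i+1),
        (Nat.choose (m-i) j : ℚ) * (1/2)^j *
          (ascPochhammer ℚ (m-i-j)).eval (1/2) * (Nat.factorial (m+i+j)) by
    rw [bmD, ← h]; ring
  rw [bmCoeff, show Finset.Icc i m = Finset.Ico i (m+1) from (Finset.Ico_add_one_right_eq_Icc i m).symm,
    Finset.sum_Ico_eq_sum_range, show m+1-i = m-i+1 by omega, Finset.sum_div, Finset.mul_sum]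
  refine Finset.sum_congr rfl fun j hj => ?_
  rw [Finset.mem_range] at hj
  obtain ⟨n, rfl⟩ : ∃ n, m = i+j+n := ⟨m-i-j, by omega⟩
  rw [show 2*(i+j+n)-2*(i+j) = 2*n by omega, show i+j+n-(i+j) = n by omega,
    show i+j+n+(i+j) = 2*i+2*j+n by ring, show i+j+n-i = j+n by omega,
    show j+n-j = n by omega, show i+j+n+i+j = 2*i+2*j+n by ring, asc_half]
  have := term_eq_s5 i j n
  linear_combination this
end

section
/- For m ≥ 2 and 1 ≤ i ≤ m-1, the Boros-Moll coefficients satisfy (m+i+1) D_{i+1}(m) * (m-i+1) D_{i-1}(m) < (m+i)(m-i+1) D_i(m)^2, where D_i(m) = C(2m, m-i) * m! * i! * (m-i)! * 2^i * d_i(m). -/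
open Finset

namespace BMaux


def w (m k : ℕ) : ℚ := 2^k * (Nat.centralBinom (m-k)) * ((m+k).choose k)

def N (m j : ℕ) : ℚ := ∑ k ∈ Finset.Icc j m, w m k * (k.choose j)

lemma w_pos (m k : ℕ) : 0 < w m k := by
  have h1 : (0:ℚ) < (Nat.centralBinom (m-k) : ℚ) := by exact_mod_cast Nat.centralBinom_pos _
  have h2 : (0:ℚ) < ((m+k).choose k : ℚ) := by exact_mod_cast Nat.choose_pos (Nat.le_add_left _ _)
  unfold w
  positivity

lemma N_pos (m j : ℕ) (h : j ≤ m) : 0 < N m j := by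
  unfold N
  apply Finset.sum_pos
  · intro k hk
    simp only [Finset.mem_Icc] at hk
    have := w_pos m k
    have : (0:ℚ) < (k.choose j : ℚ) := by exact_mod_cast Nat.choose_pos hk.1
    positivity
  · exact ⟨j, by simp [Finset.mem_Icc, h]⟩

lemma lemA (m i : ℕ) (h1 : 1 ≤ i) (h2 : i ≤ m) :
    (i:ℚ) * N m i < ((m:ℚ) - i + 1) * N m (i-1) := by
  obtain ⟨a, rfl⟩ : ∃ a, i = a + 1 := ⟨i - 1, by omega⟩
  obtain ⟨b, rfl⟩ : ∃ b, m = a + 1 + b := ⟨m - (a+1), by omega⟩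
  set m := a + 1 + b with hm
  have hins : Finset.Icc a m = insert a (Finset.Icc (a+1) m) := by
    ext x; simp only [Finset.mem_Icc, Finset.mem_insert]; omega
  have hsplit : N m a = w m a * 1 + ∑ k ∈ Finset.Icc (a+1) m, w m k * (k.choose a) := by
    unfold N
    rw [hins, Finset.sum_insert (by simp [Finset.mem_Icc])]
    simp
  have key : ∀ k ∈ Finset.Icc (a+1) m,
      ((a:ℚ)+1) * (w m k * (k.choose (a+1))) ≤ ((m:ℚ) - (a+1) + 1) * (w m k * (k.choose a)) := by
    intro k hk
    simp only [Finset.mem_Icc] at hk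
    obtain ⟨c, rfl⟩ : ∃ c, k = a + 1 + c := ⟨k - (a+1), by omega⟩
    have hnat := Nat.choose_succ_right_eq (a+1+c) a
    have hq : ((a+1+c : ℕ).choose (a+1) : ℚ) * ((a:ℚ)+1) = ((a+1+c : ℕ).choose a : ℚ) * ((c:ℚ)+1) := by
      have hsub : (a+1+c) - a = c + 1 := by omega
      rw [hsub] at hnat
      exact_mod_cast hnat
    have hc : ((c:ℚ)+1) ≤ ((m:ℚ) - (a+1) + 1) := by
      have : (c:ℚ) ≤ (b:ℚ) := by exact_mod_cast (by omega : c ≤ b)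
      push_cast [hm]
      linarith
    have hw := w_pos m (a+1+c)
    have hch : (0:ℚ) ≤ ((a+1+c : ℕ).choose a : ℚ) := by positivity
    have hq2 : w m (a+1+c) * (((a+1+c : ℕ).choose (a+1) : ℚ) * ((a:ℚ)+1))
        = w m (a+1+c) * (((a+1+c : ℕ).choose a : ℚ) * ((c:ℚ)+1)) := by rw [hq]
    have h3 := mul_le_mul_of_nonneg_left hc (mul_nonneg hw.le hch)
    nlinarith [hq2, h3]
  have hsum : ((a:ℚ)+1) * N m (a+1) ≤ ((m:ℚ) - (a+1) + 1) * ∑ k ∈ Finset.Icc (a+1) m, w m k * (k.choose a) := by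
    unfold N
    rw [Finset.mul_sum, Finset.mul_sum]
    exact Finset.sum_le_sum key
  have hwpos := w_pos m a
  have hmi : (0:ℚ) < (m:ℚ) - (a+1) + 1 := by push_cast [hm]; linarith
  have : ((a+1 : ℕ):ℚ) = (a:ℚ)+1 := by push_cast; ring
  rw [this]
  simp only [Nat.add_sub_cancel]
  nlinarith [hsum, hsplit, mul_pos hmi hwpos]



/-- telescoping certificate -/
noncomputable def U (m i k : ℕ) : ℚ := (i:ℚ) * (2*(m:ℚ)+1-2*(k:ℚ)) * w m k * ((k.choose i : ℕ) : ℚ)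

lemma step (m i k : ℕ) (h1 : 1 ≤ i) (hk : k < m) :
    w m k * ((i:ℚ)*((i:ℚ)+1)*((k.choose (i+1) : ℕ):ℚ)
      + ((m:ℚ)+(i:ℚ))*((m:ℚ)-(i:ℚ)+1)*((k.choose (i-1) : ℕ):ℚ)
      - (i:ℚ)*(2*(m:ℚ)+1)*((k.choose i : ℕ):ℚ))
    = U m i (k+1) - U m i k := by
  rcases lt_trichotomy (k+1) i with hlt | heq | hgt
  · -- all chooses vanish
    have c1 : k.choose (i+1) = 0 := Nat.choose_eq_zero_of_lt (by omega)
    have c2 : k.choose (i-1) = 0 := Nat.choose_eq_zero_of_lt (by omega)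
    have c3 : k.choose i = 0 := Nat.choose_eq_zero_of_lt (by omega)
    have c4 : (k+1).choose i = 0 := Nat.choose_eq_zero_of_lt (by omega)
    simp [U, c1, c2, c3, c4]
  · -- boundary k = i - 1
    subst heq
    obtain ⟨t, rfl⟩ : ∃ t, m = k + 1 + t := ⟨m - (k+1), by omega⟩
    have c1 : k.choose (k+1+1) = 0 := Nat.choose_eq_zero_of_lt (by omega)
    have c2 : k + 1 - 1 = k := by omega
    have c3 : k.choose k = 1 := Nat.choose_self k
    have c4 : k.choose (k+1) = 0 := Nat.choose_eq_zero_of_lt (by omega)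
    have c5 : (k+1).choose (k+1) = 1 := Nat.choose_self _
    have e1 : k + 1 + t - k = t + 1 := by omega
    have e2 : k + 1 + t - (k+1) = t := by omega
    have e3 : k + 1 + t + (k+1) = (k + 1 + t + k) + 1 := by omega
    simp only [U, w, c1, c2, c3, c4, c5, e1, e2, e3, Nat.cast_one, Nat.cast_zero]
    have fd : ((t:ℚ)+1) * (Nat.centralBinom (t+1) : ℚ) = 2*(2*(t:ℚ)+1) * (Nat.centralBinom t : ℚ) := by
      exact_mod_cast Nat.succ_mul_centralBinom_succ t
    have fe : (((k+1+t)+k+1 : ℕ) : ℚ) * (((k+1+t)+k : ℕ).choose k : ℚ)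
        = ((((k+1+t)+k+1 : ℕ)).choose (k+1) : ℚ) * ((k:ℚ)+1) := by
      have h := Nat.add_one_mul_choose_eq ((k+1+t)+k) k
      exact_mod_cast h
    push_cast at fd fe ⊢
    linear_combination ((2:ℚ)^k * ((k+1+t+k : ℕ).choose k : ℚ) * ((k:ℚ)+1+(t:ℚ)+(k:ℚ)+1)) * fd +
      ((2:ℚ)^(k+1) * (2*(t:ℚ)+1) * (Nat.centralBinom t : ℚ)) * fe
  · -- generic i ≤ k < m
    obtain ⟨j, rfl⟩ : ∃ j, k = i + j := ⟨k - i, by omega⟩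
    obtain ⟨t, rfl⟩ : ∃ t, m = (i+j) + 1 + t := ⟨m - ((i+j)+1), by omega⟩
    have e1 : (i+j)+1+t - (i+j) = t + 1 := by omega
    have e2 : (i+j)+1+t - ((i+j)+1) = t := by omega
    have ha : (((i+j).choose (i+1) : ℕ) : ℚ) * ((i:ℚ)+1) = (((i+j).choose i : ℕ):ℚ) * (j:ℚ) := by
      have := Nat.choose_succ_right_eq (i+j) i
      have h' : (i+j) - i = j := by omega
      rw [h'] at this
      exact_mod_cast this
    have hb : (((i+j).choose i : ℕ) : ℚ) * (i:ℚ) = (((i+j).choose (i-1) : ℕ):ℚ) * ((j:ℚ)+1) := by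
      have := Nat.choose_succ_right_eq (i+j) (i-1)
      have h' : i - 1 + 1 = i := by omega
      have h'' : (i+j) - (i-1) = j + 1 := by omega
      rw [h', h''] at this
      exact_mod_cast this
    have hc : ((((i+j)+1).choose i : ℕ) : ℚ) = (((i+j).choose (i-1) : ℕ):ℚ) + (((i+j).choose i : ℕ):ℚ) := by
      have h := Nat.choose_succ_succ (i+j) (i-1)
      simp only [Nat.succ_eq_add_one] at h
      have h' : i - 1 + 1 = i := by omega
      rw [h'] at h
      exact_mod_cast h
    have hd : ((t:ℚ)+1) * (Nat.centralBinom (t+1) : ℚ) = 2*(2*(t:ℚ)+1) * (Nat.centralBinom t : ℚ) := by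
      exact_mod_cast Nat.succ_mul_centralBinom_succ t
    have he : (((i:ℚ)+(j:ℚ)+1+(t:ℚ))+((i:ℚ)+(j:ℚ))+1) * ((((i+j)+1+t+(i+j) : ℕ)).choose (i+j) : ℚ)
        = ((((i+j)+1+t+(i+j)+1 : ℕ)).choose ((i+j)+1) : ℚ) * (((i:ℚ)+(j:ℚ))+1) := by
      have h := Nat.add_one_mul_choose_eq ((i+j)+1+t+(i+j)) (i+j)
      exact_mod_cast h
    have e3 : (i+j)+1+t + ((i+j)+1) = (i+j)+1+t+(i+j)+1 := by omega
    simp only [U, w, e1, e2, e3]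
    rw [hc]
    push_cast
    refine mul_left_cancel₀ (a := ((j:ℚ)+1)*(((i:ℚ)+(j:ℚ))+1)) (by positivity) ?_
    linear_combination
      (((j:ℚ)+1)*(((i:ℚ)+(j:ℚ))+1)*(2:ℚ)^(i+j) * (Nat.centralBinom (t+1) : ℚ)
        * ((((i+j)+1+t+(i+j) : ℕ)).choose (i+j) : ℚ) * (i:ℚ)) * ha
      + (-((2:ℚ)^(i+j) * (Nat.centralBinom (t+1) : ℚ) * ((((i+j)+1+t+(i+j) : ℕ)).choose (i+j) : ℚ)
          * ((((i:ℚ)+(j:ℚ))+1)*((((i:ℚ)+(j:ℚ)+1+(t:ℚ))+(i:ℚ))*(((i:ℚ)+(j:ℚ)+1+(t:ℚ))-(i:ℚ)+1))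
             - (i:ℚ)*((t:ℚ)+1)*(((i:ℚ)+(j:ℚ)+1+(t:ℚ))+((i:ℚ)+(j:ℚ))+1)))) * hb
      + (((j:ℚ)+1)*(((i:ℚ)+(j:ℚ))+1)*(2:ℚ)^(i+j) * (i:ℚ)
          * ((((i+j)+1+t+(i+j)+1 : ℕ)).choose ((i+j)+1) : ℚ)
          * (((i+j).choose (i-1) : ℚ) + ((i+j).choose i : ℚ))) * hd
      + (((j:ℚ)+1)*(2:ℚ)^(i+j) * (i:ℚ) * ((t:ℚ)+1) * (Nat.centralBinom (t+1) : ℚ)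
          * (((i+j).choose (i-1) : ℚ) + ((i+j).choose i : ℚ))) * he



lemma stepTop (m i : ℕ) (h1 : 1 ≤ i) (h2 : i ≤ m) :
    w m m * ((i:ℚ)*((i:ℚ)+1)*((m.choose (i+1) : ℕ):ℚ)
      + ((m:ℚ)+(i:ℚ))*((m:ℚ)-(i:ℚ)+1)*((m.choose (i-1) : ℕ):ℚ)
      - (i:ℚ)*(2*(m:ℚ)+1)*((m.choose i : ℕ):ℚ))
    = - U m i m := by
  obtain ⟨q, rfl⟩ : ∃ q, m = i + q := ⟨m - i, by omega⟩
  have ha : (((i+q).choose (i+1) : ℕ) : ℚ) * ((i:ℚ)+1) = (((i+q).choose i : ℕ):ℚ) * (q:ℚ) := by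
    have := Nat.choose_succ_right_eq (i+q) i
    have h' : i + q - i = q := by omega
    rw [h'] at this
    exact_mod_cast this
  have hb : (((i+q).choose i : ℕ) : ℚ) * (i:ℚ) = (((i+q).choose (i-1) : ℕ):ℚ) * ((q:ℚ)+1) := by
    have := Nat.choose_succ_right_eq (i+q) (i-1)
    have h' : i - 1 + 1 = i := by omega
    have h'' : i + q - (i-1) = q + 1 := by omega
    rw [h', h''] at this
    exact_mod_cast this
  simp only [U]
  push_cast
  linear_combination (w (i+q) (i+q) * (i:ℚ)) * ha - (w (i+q) (i+q) * ((i:ℚ)+(q:ℚ)+(i:ℚ))) * hb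

lemma lemB (m i : ℕ) (h1 : 1 ≤ i) (h2 : i + 1 ≤ m) :
    (i:ℚ)*((i:ℚ)+1)*N m (i+1) + ((m:ℚ)+(i:ℚ))*((m:ℚ)-(i:ℚ)+1)*N m (i-1)
      = (i:ℚ)*(2*(m:ℚ)+1)*N m i := by
  have hNr : ∀ j, N m j = ∑ k ∈ Finset.range (m+1), w m k * (k.choose j) := by
    intro j
    unfold N
    apply Finset.sum_subset
    · intro x hx
      simp only [Finset.mem_Icc] at hx
      simp only [Finset.mem_range]
      omega
    · intro x hx hx'
      simp only [Finset.mem_Icc] at hx'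
      simp only [Finset.mem_range] at hx
      have : x.choose j = 0 := Nat.choose_eq_zero_of_lt (by omega)
      simp [this]
  have key : ∑ k ∈ Finset.range (m+1), (w m k * ((i:ℚ)*((i:ℚ)+1)*((k.choose (i+1) : ℕ):ℚ)
      + ((m:ℚ)+(i:ℚ))*((m:ℚ)-(i:ℚ)+1)*((k.choose (i-1) : ℕ):ℚ)
      - (i:ℚ)*(2*(m:ℚ)+1)*((k.choose i : ℕ):ℚ))) = 0 := by
    rw [Finset.sum_range_succ]
    have tele : ∑ k ∈ Finset.range m, (w m k * ((i:ℚ)*((i:ℚ)+1)*((k.choose (i+1) : ℕ):ℚ)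
        + ((m:ℚ)+(i:ℚ))*((m:ℚ)-(i:ℚ)+1)*((k.choose (i-1) : ℕ):ℚ)
        - (i:ℚ)*(2*(m:ℚ)+1)*((k.choose i : ℕ):ℚ)))
        = U m i m - U m i 0 := by
      rw [← Finset.sum_range_sub (U m i) m]
      apply Finset.sum_congr rfl
      intro k hk
      exact step m i k h1 (Finset.mem_range.mp hk)
    have hU0 : U m i 0 = 0 := by
      have : (0:ℕ).choose i = 0 := Nat.choose_eq_zero_of_lt (by omega)
      simp [U, this]
    have hTop := stepTop m i h1 (by omega)
    rw [tele, hU0, hTop]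
    ring
  have expand : ∑ k ∈ Finset.range (m+1), (w m k * ((i:ℚ)*((i:ℚ)+1)*((k.choose (i+1) : ℕ):ℚ)
      + ((m:ℚ)+(i:ℚ))*((m:ℚ)-(i:ℚ)+1)*((k.choose (i-1) : ℕ):ℚ)
      - (i:ℚ)*(2*(m:ℚ)+1)*((k.choose i : ℕ):ℚ)))
      = (i:ℚ)*((i:ℚ)+1) * (∑ k ∈ Finset.range (m+1), w m k * (k.choose (i+1)))
        + ((m:ℚ)+(i:ℚ))*((m:ℚ)-(i:ℚ)+1) * (∑ k ∈ Finset.range (m+1), w m k * (k.choose (i-1)))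
        - (i:ℚ)*(2*(m:ℚ)+1) * (∑ k ∈ Finset.range (m+1), w m k * (k.choose i)) := by
    rw [Finset.mul_sum, Finset.mul_sum, Finset.mul_sum, ← Finset.sum_add_distrib,
      ← Finset.sum_sub_distrib]
    apply Finset.sum_congr rfl
    intro k _
    ring
  rw [hNr (i+1), hNr (i-1), hNr i]
  rw [expand] at key
  linarith [key]


lemma core (m i : ℕ) (h1 : 1 ≤ i) (h2 : i + 1 ≤ m) :
    ((i:ℚ)+1) * N m (i+1) * N m (i-1) < (i:ℚ) * (N m i)^2 := by
  have hB := lemB m i h1 h2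
  have hA := lemA m i h1 (by omega)
  have hP := N_pos m (i-1) (by omega)
  have hQ := N_pos m i (by omega)
  have hi : (1:ℚ) ≤ (i:ℚ) := by exact_mod_cast h1
  have h1' : ((m:ℚ)-(i:ℚ)+1) * N m (i-1) - (i:ℚ) * N m i > 0 := by linarith
  have h2' : ((m:ℚ)+(i:ℚ)) * N m (i-1) - (i:ℚ) * N m i > 0 := by nlinarith
  have hBP : ((i:ℚ)*((i:ℚ)+1)*N m (i+1)) * N m (i-1)
      + (((m:ℚ)+(i:ℚ))*((m:ℚ)-(i:ℚ)+1)*N m (i-1)) * N m (i-1)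
      = ((i:ℚ)*(2*(m:ℚ)+1)*N m i) * N m (i-1) := by
    linear_combination (N m (i-1)) * hB
  nlinarith [mul_pos h1' h2', hBP, hP, hQ, hi]

lemma bmCoeff_eq (m i : ℕ) :
    bmCoeff m i = N m i / 4^m := by
  rw [bmCoeff]
  have h4 : (2:ℚ)^(2*m) = 4^m := by
    rw [two_mul, pow_add, ← mul_pow]
    norm_num
  rw [h4]
  unfold N w Nat.centralBinom
  congr 1
  apply Finset.sum_congr rfl
  intro k hk
  simp only [Finset.mem_Icc] at hk
  have h2 : 2*m - 2*k = 2*(m-k) := by omega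
  rw [h2]

end BMaux

theorem bmD_log_concavity (m i : ℕ) (hm : 2 ≤ m) (hi1 : 1 ≤ i) (hi2 : i ≤ m - 1) :
    ((m:ℚ)+i+1) * bmD m (i+1) * (((m:ℚ)-i+1) * bmD m (i-1)) <
      ((m:ℚ)+i) * ((m:ℚ)-i+1) * (bmD m i)^2 := by
  obtain ⟨a, rfl⟩ : ∃ a, i = a + 1 := ⟨i-1, by omega⟩
  obtain ⟨b, rfl⟩ : ∃ b, m = a + b + 2 := ⟨m-a-2, by omega⟩
  have s4 : a + 1 - 1 = a := by omega
  have hcore := BMaux.core (a+b+2) (a+1) (by omega) (by omega)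
  rw [s4] at hcore
  simp only [bmD, BMaux.bmCoeff_eq, s4]
  have s1 : a + b + 2 - (a+1+1) = b := by omega
  have s2 : a + b + 2 - (a+1) = b+1 := by omega
  have s3 : a + b + 2 - a = b+2 := by omega
  rw [s1, s2, s3]
  have c1 : (((2*(a+b+2)).choose b : ℕ) : ℚ)
      = ((2*(a+b+2)).factorial : ℚ) / ((b.factorial : ℚ) * (((2*a+b+4).factorial : ℚ))) := by
    rw [Nat.cast_choose ℚ (by omega)]
    have : 2*(a+b+2) - b = 2*a+b+4 := by omega
    rw [this]
  have c2 : (((2*(a+b+2)).choose (b+1) : ℕ) : ℚ)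
      = ((2*(a+b+2)).factorial : ℚ) / (((b+1).factorial : ℚ) * (((2*a+b+3).factorial : ℚ))) := by
    rw [Nat.cast_choose ℚ (by omega)]
    have : 2*(a+b+2) - (b+1) = 2*a+b+3 := by omega
    rw [this]
  have c3 : (((2*(a+b+2)).choose (b+2) : ℕ) : ℚ)
      = ((2*(a+b+2)).factorial : ℚ) / (((b+2).factorial : ℚ) * (((2*a+b+2).factorial : ℚ))) := by
    rw [Nat.cast_choose ℚ (by omega)]
    have : 2*(a+b+2) - (b+2) = 2*a+b+2 := by omega
    rw [this]
  have f1 : ((2*a+b+4).factorial : ℚ) = (2*(a:ℚ)+(b:ℚ)+4) * ((2*a+b+3).factorial : ℚ) := by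
    have h : (2*a+b+4) = (2*a+b+3) + 1 := by omega
    rw [h, Nat.factorial_succ]
    push_cast
    ring
  have f2 : ((2*a+b+3).factorial : ℚ) = (2*(a:ℚ)+(b:ℚ)+3) * ((2*a+b+2).factorial : ℚ) := by
    have h : (2*a+b+3) = (2*a+b+2) + 1 := by omega
    rw [h, Nat.factorial_succ]
    push_cast
    ring
  have g1 : ((a+1+1).factorial : ℚ) = ((a:ℚ)+2) * ((a+1).factorial : ℚ) := by
    rw [Nat.factorial_succ]
    push_cast
    ring
  have g2 : ((a+1).factorial : ℚ) = ((a:ℚ)+1) * ((a).factorial : ℚ) := by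
    rw [Nat.factorial_succ]
    push_cast
    ring
  have h1 : ((b+1).factorial : ℚ) = ((b:ℚ)+1) * ((b).factorial : ℚ) := by
    rw [Nat.factorial_succ]
    push_cast
    ring
  have h2 : ((b+2).factorial : ℚ) = ((b:ℚ)+2) * (((b:ℚ)+1) * ((b).factorial : ℚ)) := by
    rw [show b+2 = (b+1)+1 from by omega, Nat.factorial_succ]
    push_cast
    rw [h1]
    ring
  rw [c1, c2, c3, f1, f2, g1, g2, h1, h2]
  push_cast
  have hT : (0:ℚ) < ((2*(a+b+2)).factorial : ℚ) := by exact_mod_cast (2*(a+b+2)).factorial_pos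
  have hF : (0:ℚ) < ((2*a+b+2).factorial : ℚ) := by exact_mod_cast (2*a+b+2).factorial_pos
  have hG : (0:ℚ) < ((a).factorial : ℚ) := by exact_mod_cast (a).factorial_pos
  have hH : (0:ℚ) < ((b).factorial : ℚ) := by exact_mod_cast (b).factorial_pos
  have hM : (0:ℚ) < ((a+b+2).factorial : ℚ) := by exact_mod_cast (a+b+2).factorial_pos
  have cpos : (0:ℚ) < ((b:ℚ)+2) * ((2*(a+b+2)).factorial : ℚ)^2 * ((a:ℚ)+1)
      * ((a).factorial : ℚ)^2 * 2^(2*a+2) * ((a+b+2).factorial : ℚ)^2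
      / ((2*(a:ℚ)+(b:ℚ)+3) * ((2*a+b+2).factorial : ℚ)^2 * ((4:ℚ)^(a+b+2))^2) := by
    positivity
  convert mul_lt_mul_of_pos_left hcore cpos using 1
  · rfl
  · push_cast
    field_simp
    ring
  · push_cast
    field_simp
    ring
end

section
/- For m ≥ 1 and 0 ≤ i ≤ m-1, the sequence d_i(m) is positive, and moreover m! i! (m-i)! 2^i d_i(m) = ∑_{j=0}^{m-i} C(m-i, j) (1/2)^j (1/2)_{m-i-j} (m+i+j)!, so that m! i! (m-i)! 2^i d_i(m) is a positive rational number with 2-power denominator at most 2^{m-i}. -/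
open Finset

lemma poch_half (n : ℕ) : (ascPochhammer ℚ n).eval (1/2) =
    (Nat.factorial (2*n) : ℚ) / (2^(2*n) * Nat.factorial n) := by
  induction n with
  | zero => simp
  | succ n ih =>
    rw [ascPochhammer_succ_right]
    simp only [Polynomial.eval_mul, Polynomial.eval_add, Polynomial.eval_X,
      Polynomial.eval_natCast, ih]
    have h1 : 2*(n+1) = (2*n+1)+1 := by ring
    have k1 : ((2*(n+1)).factorial : ℚ) = (2*n+2)*(2*n+1)*(2*n).factorial := by
      rw [h1, Nat.factorial_succ, Nat.factorial_succ]; push_cast; ring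
    have k2 : ((n+1).factorial : ℚ) = (n+1)*n.factorial := by
      rw [Nat.factorial_succ]; push_cast; ring
    have k3 : (2:ℚ)^(2*(n+1)) = 2^(2*n)*4 := by
      rw [show 2*(n+1) = 2*n+2 from by ring, pow_add]; norm_num
    rw [k1, k2, k3]
    have h2 : (Nat.factorial n : ℚ) ≠ 0 := by positivity
    have h3 : (Nat.factorial (2*n) : ℚ) ≠ 0 := by positivity
    field_simp
    push_cast
    ring

lemma fact_two_mul (n : ℕ) : Nat.factorial (2*n) =
    2^n * Nat.factorial n * Nat.doubleFactorial (2*n-1) := by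
  cases n with
  | zero => rfl
  | succ n =>
    have h1 : 2*(n+1) = (2*n+1)+1 := by ring
    rw [h1, Nat.factorial_eq_mul_doubleFactorial]
    have h2 : 2*n+1+1 = 2*(n+1) := by ring
    have h3 : 2*n+1 = 2*(n+1)-1 := by omega
    rw [h2, Nat.doubleFactorial_two_mul, h3]

lemma two_pow_poch (n : ℕ) : (2:ℚ)^n * (ascPochhammer ℚ n).eval (1/2) =
    (Nat.doubleFactorial (2*n-1) : ℚ) := by
  rw [poch_half, fact_two_mul]
  have h2 : (Nat.factorial n : ℚ) ≠ 0 := by positivity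
  have h4 : (2:ℚ)^(2*n) = 2^n * 2^n := by rw [two_mul, pow_add]
  push_cast
  rw [h4]
  field_simp

theorem bmCoeff_pos_and_denom (m i : ℕ) (hm : 1 ≤ m) (hi : i ≤ m - 1) :
    0 < bmCoeff m i ∧
    (Nat.factorial m : ℚ) * Nat.factorial i * Nat.factorial (m-i) * 2^i * bmCoeff m i =
      ∑ j ∈ Finset.range (m-i+1),
        (Nat.choose (m-i) j : ℚ) * (1/2)^j *
          (ascPochhammer ℚ (m-i-j)).eval (1/2) * (Nat.factorial (m+i+j)) ∧
    ∃ N : ℕ, 0 < N ∧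
      (2:ℚ)^(m-i) * ((Nat.factorial m : ℚ) * Nat.factorial i * Nat.factorial (m-i)
        * 2^i * bmCoeff m i) = N := by
  have him : i ≤ m := by omega
  -- Part 1: positivity
  have hpos : 0 < bmCoeff m i := by
    unfold bmCoeff
    apply div_pos _ (by positivity)
    apply Finset.sum_pos'
    · intro k hk
      positivity
    · refine ⟨m, by simp [him], ?_⟩
      have h1 : 2*m - 2*m = 0 := by omega
      have h2 : (0:ℕ).choose (m - m) = 1 := by simp
      have hc1 : 0 < Nat.choose (m+m) m := Nat.choose_pos (by omega)
      have hc2 : 0 < Nat.choose m i := Nat.choose_pos him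
      rw [h1]
      simp only [Nat.sub_self, Nat.choose_self]
      positivity
  -- Part 2: the identity
  have key : (Nat.factorial m : ℚ) * Nat.factorial i * Nat.factorial (m-i) * 2^i * bmCoeff m i =
      ∑ j ∈ Finset.range (m-i+1),
        (Nat.choose (m-i) j : ℚ) * (1/2)^j *
          (ascPochhammer ℚ (m-i-j)).eval (1/2) * (Nat.factorial (m+i+j)) := by
    unfold bmCoeff
    rw [← Finset.Ico_add_one_right_eq_Icc, Finset.sum_Ico_eq_sum_range]
    have hr : m + 1 - i = m - i + 1 := by omega
    rw [hr, Finset.sum_div, Finset.mul_sum]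
    apply Finset.sum_congr rfl
    intro j hj
    rw [Finset.mem_range] at hj
    obtain ⟨a, ha⟩ : ∃ a, m = i + j + a := ⟨m - i - j, by omega⟩
    subst ha
    have e1 : i + j + a - i = j + a := by omega
    have e2 : i + j + a - i - j = a := by omega
    have e3 : 2*(i+j+a) - 2*(i+j) = 2*a := by omega
    have e4 : i + j + a - (i + j) = a := by omega
    have e5 : i + j + a + (i + j) = i + j + a + i + j := by omega
    rw [e2, e1, e3, e4, e5]
    rw [Nat.cast_choose ℚ (show a ≤ 2*a by omega),
        Nat.cast_choose ℚ (show i + j ≤ i + j + a + i + j by omega),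
        Nat.cast_choose ℚ (show i ≤ i + j by omega),
        Nat.cast_choose ℚ (show j ≤ j + a by omega)]
    have f1 : 2*a - a = a := by omega
    have f2 : i + j + a + i + j - (i + j) = i + j + a := by omega
    have f3 : i + j - i = j := by omega
    have f4 : j + a - j = a := by omega
    rw [f1, f2, f3, f4, poch_half]
    have n1 : (Nat.factorial a : ℚ) ≠ 0 := by positivity
    have n2 : (Nat.factorial i : ℚ) ≠ 0 := by positivity
    have n3 : (Nat.factorial j : ℚ) ≠ 0 := by positivity
    have n4 : (Nat.factorial (i+j) : ℚ) ≠ 0 := by positivity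
    have n5 : (Nat.factorial (i+j+a) : ℚ) ≠ 0 := by positivity
    have hp : (2:ℚ)^(2*(i+j+a)) = 2^i * 2^i * 2^j * 2^j * 2^a * 2^a := by
      rw [← pow_add, ← pow_add, ← pow_add, ← pow_add, ← pow_add]; ring_nf
    have hp2 : (2:ℚ)^(i+j) = 2^i * 2^j := by rw [pow_add]
    have hp3 : (2:ℚ)^(2*a) = 2^a * 2^a := by rw [two_mul, pow_add]
    rw [hp, hp2, hp3]
    have h12 : ((1:ℚ)/2)^j = 1/2^j := by rw [div_pow, one_pow]
    rw [h12]
    field_simp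
  refine ⟨hpos, key, ?_⟩
  -- Part 3
  refine ⟨∑ j ∈ Finset.range (m-i+1),
      Nat.choose (m-i) j * Nat.doubleFactorial (2*(m-i-j)-1) * Nat.factorial (m+i+j), ?_, ?_⟩
  · apply Finset.sum_pos'
    · intro k _; exact Nat.zero_le _
    · refine ⟨0, by simp, ?_⟩
      simp only [Nat.choose_zero_right, one_mul]
      exact Nat.mul_pos (Nat.doubleFactorial_pos _) (Nat.factorial_pos _)
  · rw [key, Finset.mul_sum]
    push_cast
    apply Finset.sum_congr rfl
    intro j hj
    rw [Finset.mem_range] at hj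
    have hsplit : (2:ℚ)^(m-i) = 2^j * 2^(m-i-j) := by
      rw [← pow_add]; congr 1; omega
    have := two_pow_poch (m-i-j)
    push_cast at this
    rw [hsplit, ← this]
    have h12 : ((1:ℚ)/2)^j = 1/2^j := by rw [div_pow, one_pow]
    rw [h12]
    field_simp
end
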